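/- arXiv:2110.14134 — 4 statements merged into one kernel-verified Lean document; each statement's English description precedes it below -/
import Mathlib

section
/- Let A = a₀·I + a·σ and B = b₀·I + b·σ be qubit observables with (a₀,a),(b₀,b) ∈ ℝ×ℝ³ and with {a,b} linearly independent in ℝ³. Then the uncertainty region {(Δ_ρA, Δ_ρB) : ρ a qubit density matrix} ⊆ ℝ²_{≥0} equals the set of pairs (x,y) with x ∈ [0,|a|], y ∈ [0,|b|] satisfying |b|²x² + |a|²y² + 2|⟨a,b⟩|·√((|a|²−x²)(|b|²−y²)) ≥ |a|²|b|² + ⟨a,b⟩², where |·| is the Euclidean norm and ⟨a,b⟩ the Euclidean inner product on ℝ³. -/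
open Matrix MeasureTheory Filter Set
open scoped RealInnerProductSpace Kronecker ComplexOrder

noncomputable section

/-- ℝ³ with the Euclidean norm and inner product. -/
abbrev E3 : Type := EuclideanSpace ℝ (Fin 3)

/-- The Pauli matrices. -/
def pauli1 : Matrix (Fin 2) (Fin 2) ℂ := !![0, 1; 1, 0]
def pauli2 : Matrix (Fin 2) (Fin 2) ℂ := !![0, -Complex.I; Complex.I, 0]
def pauli3 : Matrix (Fin 2) (Fin 2) ℂ := !![1, 0; 0, -1]

/-- The qubit observable `a₀·I + a·σ`. -/
def qObs (a0 : ℝ) (a : E3) : Matrix (Fin 2) (Fin 2) ℂ :=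
  (a0 : ℂ) • (1 : Matrix (Fin 2) (Fin 2) ℂ)
    + (a 0 : ℂ) • pauli1 + (a 1 : ℂ) • pauli2 + (a 2 : ℂ) • pauli3

/-- A density matrix: positive semidefinite with trace one. -/
def IsDensityMatrix {n : Type*} [Fintype n] (ρ : Matrix n n ℂ) : Prop :=
  ρ.PosSemidef ∧ ρ.trace = 1

/-- Mean value `⟨M⟩_ρ = Tr(Mρ)` of an observable `M` in the state `ρ`. -/
def mean {n : Type*} [Fintype n] (M ρ : Matrix n n ℂ) : ℝ :=
  (Matrix.trace (M * ρ)).re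

/-- Variance `(Δ_ρ M)² = Tr(M²ρ) − (Tr(Mρ))²`. -/
def variance {n : Type*} [Fintype n] (M ρ : Matrix n n ℂ) : ℝ :=
  (Matrix.trace (M * M * ρ)).re - (mean M ρ) ^ 2

/-- Uncertainty `Δ_ρ M` (standard deviation). -/
def uncertainty {n : Type*} [Fintype n] (M ρ : Matrix n n ℂ) : ℝ :=
  Real.sqrt (variance M ρ)

/-- Gram matrix of a tuple of vectors in ℝ³. -/
def gram {m : ℕ} (v : Fin m → E3) : Matrix (Fin m) (Fin m) ℝ :=
  Matrix.of fun i j => (inner ℝ (v i) (v j) : ℝ)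

lemma gram_isHermitian {m : ℕ} (v : Fin m → E3) : (gram v).IsHermitian := by
  ext i j
  simp [_root_.gram, Matrix.conjTranspose_apply, mul_comm, real_inner_comm]

/-- Smallest eigenvalue of the Gram matrix. -/
def lamMin {m : ℕ} (v : Fin m → E3) : ℝ := ⨅ i, (gram_isHermitian v).eigenvalues i

/-- Largest eigenvalue of the Gram matrix. -/
def lamMax {m : ℕ} (v : Fin m → E3) : ℝ := ⨆ i, (gram_isHermitian v).eigenvalues i

/-! ### Auxiliary material -/

/-- The density matrix with Bloch vector `(r1, r2, r3)`. -/
def rhoB (r1 r2 r3 : ℝ) : Matrix (Fin 2) (Fin 2) ℂ :=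
  !![((1+r3)/2 : ℝ), ((r1 : ℂ) - r2*Complex.I)/2; ((r1 : ℂ) + r2*Complex.I)/2, ((1-r3)/2 : ℝ)]

lemma rhoB_trace (r1 r2 r3 : ℝ) : (rhoB r1 r2 r3).trace = 1 := by
  simp [rhoB, Matrix.trace_fin_two]
  ring

lemma mean_rhoB (a0 r1 r2 r3 : ℝ) (a : E3) :
    mean (qObs a0 a) (rhoB r1 r2 r3) = a0 + (a 0 * r1 + a 1 * r2 + a 2 * r3) := by
  simp [mean, qObs, rhoB, pauli1, pauli2, pauli3, Matrix.trace_fin_two, Matrix.mul_apply,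
    Fin.sum_univ_two, Complex.add_re, Complex.mul_re, Complex.mul_im]
  ring

lemma var_rhoB (a0 r1 r2 r3 : ℝ) (a : E3) :
    variance (qObs a0 a) (rhoB r1 r2 r3)
      = (a 0 ^ 2 + a 1 ^ 2 + a 2 ^ 2) - (a 0 * r1 + a 1 * r2 + a 2 * r3) ^ 2 := by
  rw [variance, mean_rhoB]
  simp [qObs, rhoB, pauli1, pauli2, pauli3, Matrix.trace_fin_two, Matrix.mul_apply,
    Fin.sum_univ_two, Complex.add_re, Complex.mul_re, Complex.mul_im]
  ring

lemma key_psd (r1 r2 r3 v1 v2 v3 S : ℝ) (hr : r1^2+r2^2+r3^2 ≤ 1)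
    (hv : v1^2+v2^2+v3^2 = S^2) (hS : 0 ≤ S) :
    0 ≤ S + (r1*v1+r2*v2+r3*v3) := by
  nlinarith [sq_nonneg (r1*v2-r2*v1), sq_nonneg (r1*v3-r3*v1), sq_nonneg (r2*v3-r3*v2),
    sq_nonneg (S + (r1*v1+r2*v2+r3*v3)), sq_nonneg (r1*v1+r2*v2+r3*v3), hS, mul_nonneg hS hS]

lemma rhoB_herm (r1 r2 r3 : ℝ) : (rhoB r1 r2 r3).IsHermitian := by
  ext i j
  fin_cases i <;> fin_cases j <;>
    simp [rhoB, Matrix.conjTranspose_apply, Complex.ext_iff]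

lemma rhoB_posSemidef (r1 r2 r3 : ℝ) (hr : r1^2+r2^2+r3^2 ≤ 1) :
    (rhoB r1 r2 r3).PosSemidef := by
  refine posSemidef_iff_dotProduct_mulVec.mpr ⟨rhoB_herm r1 r2 r3, fun x => ?_⟩
  rw [Complex.nonneg_iff]
  set x0 := x 0; set x1 := x 1
  have hre : (star x ⬝ᵥ (rhoB r1 r2 r3) *ᵥ x).re =
      (1/2) * ((x0.re^2+x0.im^2+x1.re^2+x1.im^2)
        + (r1 * (2*(x0.re*x1.re + x0.im*x1.im))
         + r2 * (2*(x0.re*x1.im - x0.im*x1.re))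
         + r3 * (x0.re^2+x0.im^2-(x1.re^2+x1.im^2)))) := by
    simp [rhoB, dotProduct, Matrix.mulVec, Fin.sum_univ_two, Complex.add_re, Complex.mul_re,
      Complex.mul_im, x0, x1]
    ring
  have him : (star x ⬝ᵥ (rhoB r1 r2 r3) *ᵥ x).im = 0 := by
    simp [rhoB, dotProduct, Matrix.mulVec, Fin.sum_univ_two, Complex.add_im, Complex.mul_re,
      Complex.mul_im, x0, x1]
    ring
  refine ⟨?_, him.symm⟩
  rw [hre]
  have h := key_psd r1 r2 r3 (2*(x0.re*x1.re + x0.im*x1.im)) (2*(x0.re*x1.im - x0.im*x1.re))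
      (x0.re^2+x0.im^2-(x1.re^2+x1.im^2)) (x0.re^2+x0.im^2+x1.re^2+x1.im^2) hr (by ring)
      (by positivity)
  linarith

lemma psd_det_nonneg {n : Type*} [Fintype n] [DecidableEq n] {M : Matrix n n ℂ}
    (hM : M.PosSemidef) : 0 ≤ M.det := by
  rw [hM.isHermitian.det_eq_prod_eigenvalues]
  apply Finset.prod_nonneg
  intro i _
  simpa using hM.eigenvalues_nonneg i

lemma density_decomp (ρ : Matrix (Fin 2) (Fin 2) ℂ) (h : ρ.PosSemidef) (ht : ρ.trace = 1) :
    ∃ r1 r2 r3 : ℝ, r1^2+r2^2+r3^2 ≤ 1 ∧ ρ = rhoB r1 r2 r3 := by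
  have herm := h.isHermitian
  have h00 : (ρ 0 0).im = 0 := by
    have := herm.apply 0 0
    have := congrArg Complex.im this
    simp [Complex.conj_im] at this
    linarith
  have h11 : (ρ 1 1).im = 0 := by
    have := herm.apply 1 1
    have := congrArg Complex.im this
    simp [Complex.conj_im] at this
    linarith
  have h10 : ρ 1 0 = starRingEnd ℂ (ρ 0 1) := by
    have := herm.apply 1 0
    simpa using this.symm
  have htr : (ρ 0 0).re + (ρ 1 1).re = 1 := by
    rw [Matrix.trace_fin_two] at ht
    have := congrArg Complex.re ht
    simpa using this
  have hdet : 0 ≤ ρ.det := psd_det_nonneg h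
  have hdet' : (ρ 0 1).re^2 + (ρ 0 1).im^2 ≤ (ρ 0 0).re * (ρ 1 1).re := by
    rw [Matrix.det_fin_two, h10, Complex.nonneg_iff] at hdet
    have := hdet.1
    simp [Complex.sub_re, Complex.mul_re, Complex.conj_re, Complex.conj_im, h00, h11] at this
    nlinarith [this]
  refine ⟨2*(ρ 0 1).re, -2*(ρ 0 1).im, (ρ 0 0).re - (ρ 1 1).re, by nlinarith, ?_⟩
  ext i j
  fin_cases i <;> fin_cases j <;>
    simp [rhoB, Complex.ext_iff, h00, h11, h10, Complex.conj_re, Complex.conj_im] <;>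
    first
      | (constructor <;> ring_nf <;> linarith)
      | (ring_nf; linarith)
      | linarith

lemma norm_sq_E3 (a : E3) : ‖a‖^2 = a 0^2 + a 1^2 + a 2^2 := by
  rw [EuclideanSpace.norm_eq, Real.sq_sqrt (by positivity)]
  simp [Fin.sum_univ_three, sq_abs]

lemma inner_E3 (a b : E3) : (inner ℝ a b : ℝ) = a 0*b 0 + a 1*b 1 + a 2*b 2 := by
  simp [PiLp.inner_apply, Fin.sum_univ_three]
  ring

lemma Q_le (a1 a2 a3 b1 b2 b3 r1 r2 r3 : ℝ) (hr : r1^2+r2^2+r3^2 ≤ 1) :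
    (b1^2+b2^2+b3^2)*(a1*r1+a2*r2+a3*r3)^2
      - 2*(a1*b1+a2*b2+a3*b3)*(a1*r1+a2*r2+a3*r3)*(b1*r1+b2*r2+b3*r3)
      + (a1^2+a2^2+a3^2)*(b1*r1+b2*r2+b3*r3)^2
    ≤ (a1^2+a2^2+a3^2)*(b1^2+b2^2+b3^2) - (a1*b1+a2*b2+a3*b3)^2 := by
  nlinarith [sq_nonneg (r1*(a2*b3-a3*b2)+r2*(a3*b1-a1*b3)+r3*(a1*b2-a2*b1)),
    mul_nonneg (sub_nonneg.2 hr)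
      (by positivity : (0:ℝ) ≤ (a2*b3-a3*b2)^2+(a3*b1-a1*b3)^2+(a1*b2-a2*b1)^2)]

lemma cs_le (a1 a2 a3 r1 r2 r3 : ℝ) (hr : r1^2+r2^2+r3^2 ≤ 1) :
    (a1*r1+a2*r2+a3*r3)^2 ≤ a1^2+a2^2+a3^2 := by
  nlinarith [sq_nonneg (a1*r2-a2*r1), sq_nonneg (a1*r3-a3*r1), sq_nonneg (a2*r3-a3*r2),
    mul_nonneg (sub_nonneg.2 hr) (by positivity : (0:ℝ) ≤ a1^2+a2^2+a3^2)]

lemma detG_pos (a b : E3) (hab : LinearIndependent ℝ ![a, b]) :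
    0 < ‖a‖^2*‖b‖^2 - (inner ℝ a b : ℝ)^2 := by
  rcases linearIndependent_fin2.mp hab with ⟨hb, hlin⟩
  simp only [Matrix.cons_val_one, Matrix.head_cons, Matrix.cons_val_zero] at hb hlin
  set g : ℝ := inner ℝ a b with hg
  have hb2 : 0 < ‖b‖^2 := pow_pos (norm_pos_iff.mpr hb) 2
  have hv : ‖b‖^2 • a - g • b ≠ 0 := by
    intro hv0
    apply hlin (g / ‖b‖^2)
    have h1 : ‖b‖^2 • a = g • b := by linear_combination (norm := module) hv0
    have h2 : a = (‖b‖^2)⁻¹ • (g • b) := by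
      rw [← h1, smul_smul, inv_mul_cancel₀ hb2.ne', one_smul]
    rw [h2, smul_smul]
    rw [div_eq_inv_mul]
  have hnorm : 0 < ‖‖b‖^2 • a - g • b‖^2 := pow_pos (norm_pos_iff.mpr hv) 2
  have hexp : ‖‖b‖^2 • a - g • b‖^2 = ‖b‖^2 * (‖a‖^2*‖b‖^2 - g^2) := by
    rw [norm_sub_sq_real, norm_smul, norm_smul, real_inner_smul_left, real_inner_smul_right,
      Real.norm_eq_abs, Real.norm_eq_abs, mul_pow, mul_pow, sq_abs, sq_abs, ← hg]
    ring
  rw [hexp] at hnorm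
  nlinarith [hnorm, hb2]

set_option maxHeartbeats 1000000 in
/-- the uncertainty region of a pair of qubit observables with linearly
independent Bloch vectors. -/
theorem uncertainty_region_two_observables
    (a0 b0 : ℝ) (a b : E3) (hab : LinearIndependent ℝ ![a, b]) :
    {p : ℝ × ℝ | ∃ ρ : Matrix (Fin 2) (Fin 2) ℂ, IsDensityMatrix ρ ∧
        p = (uncertainty (qObs a0 a) ρ, uncertainty (qObs b0 b) ρ)} =
    {p : ℝ × ℝ | p.1 ∈ Set.Icc 0 ‖a‖ ∧ p.2 ∈ Set.Icc 0 ‖b‖ ∧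
        ‖b‖ ^ 2 * p.1 ^ 2 + ‖a‖ ^ 2 * p.2 ^ 2
            + 2 * |(inner ℝ a b : ℝ)| * Real.sqrt ((‖a‖ ^ 2 - p.1 ^ 2) * (‖b‖ ^ 2 - p.2 ^ 2))
          ≥ ‖a‖ ^ 2 * ‖b‖ ^ 2 + (inner ℝ a b : ℝ) ^ 2} := by
  have hA2 : ‖a‖^2 = a 0^2 + a 1^2 + a 2^2 := norm_sq_E3 a
  have hB2 : ‖b‖^2 = b 0^2 + b 1^2 + b 2^2 := norm_sq_E3 b
  have hg : (inner ℝ a b : ℝ) = a 0*b 0 + a 1*b 1 + a 2*b 2 := inner_E3 a b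
  set g : ℝ := (inner ℝ a b : ℝ) with hgdef
  have hD : 0 < ‖a‖^2*‖b‖^2 - g^2 := detG_pos a b hab
  ext p
  simp only [Set.mem_setOf_eq, Set.mem_Icc]
  constructor
  · rintro ⟨ρ, ⟨hpsd, htr⟩, hp⟩
    obtain ⟨r1, r2, r3, hr, rfl⟩ := density_decomp ρ hpsd htr
    set s : ℝ := a 0 * r1 + a 1 * r2 + a 2 * r3 with hsdef
    set t : ℝ := b 0 * r1 + b 1 * r2 + b 2 * r3 with htdef
    have hs2 : s^2 ≤ ‖a‖^2 := by rw [hA2]; exact cs_le _ _ _ _ _ _ hr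
    have ht2 : t^2 ≤ ‖b‖^2 := by rw [hB2]; exact cs_le _ _ _ _ _ _ hr
    have hvarA : variance (qObs a0 a) (rhoB r1 r2 r3) = ‖a‖^2 - s^2 := by
      rw [var_rhoB, hA2]
    have hvarB : variance (qObs b0 b) (rhoB r1 r2 r3) = ‖b‖^2 - t^2 := by
      rw [var_rhoB, hB2]
    have hx : p.1 = Real.sqrt (‖a‖^2 - s^2) := by
      rw [hp]; simp [uncertainty, hvarA]
    have hy : p.2 = Real.sqrt (‖b‖^2 - t^2) := by
      rw [hp]; simp [uncertainty, hvarB]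
    have hx2 : p.1^2 = ‖a‖^2 - s^2 := by
      rw [hx, Real.sq_sqrt (by linarith)]
    have hy2 : p.2^2 = ‖b‖^2 - t^2 := by
      rw [hy, Real.sq_sqrt (by linarith)]
    refine ⟨⟨by rw [hx]; positivity, ?_⟩, ⟨by rw [hy]; positivity, ?_⟩, ?_⟩
    · rw [hx]
      calc Real.sqrt (‖a‖^2 - s^2) ≤ Real.sqrt (‖a‖^2) := by
            apply Real.sqrt_le_sqrt; nlinarith [sq_nonneg s]
        _ = ‖a‖ := by rw [Real.sqrt_sq (norm_nonneg a)]
    · rw [hy]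
      calc Real.sqrt (‖b‖^2 - t^2) ≤ Real.sqrt (‖b‖^2) := by
            apply Real.sqrt_le_sqrt; nlinarith [sq_nonneg t]
        _ = ‖b‖ := by rw [Real.sqrt_sq (norm_nonneg b)]
    · have hsq : Real.sqrt ((‖a‖^2 - p.1^2) * (‖b‖^2 - p.2^2)) = |s| * |t| := by
        rw [hx2, hy2]
        have : ‖a‖^2 - (‖a‖^2 - s^2) = s^2 := by ring
        rw [this]
        have : ‖b‖^2 - (‖b‖^2 - t^2) = t^2 := by ring
        rw [this, ← sq_abs s, ← sq_abs t, ← mul_pow,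
          Real.sqrt_sq (by positivity)]
      have hQ : ‖b‖^2*s^2 - 2*g*s*t + ‖a‖^2*t^2 ≤ ‖a‖^2*‖b‖^2 - g^2 := by
        rw [hgdef, hA2, hB2, inner_E3 a b]
        exact Q_le _ _ _ _ _ _ _ _ _ hr
      have habs : g*s*t ≤ |g| * |s| * |t| := by
        calc g*s*t ≤ |g*s*t| := le_abs_self _
          _ = |g| * |s| * |t| := by rw [abs_mul, abs_mul]
      rw [ge_iff_le, hsq, hx2, hy2]
      nlinarith [hQ, habs]
  · rintro ⟨⟨hx0, hxa⟩, ⟨hy0, hyb⟩, hineq⟩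
    set x := p.1; set y := p.2
    have hx2 : x^2 ≤ ‖a‖^2 := by nlinarith
    have hy2 : y^2 ≤ ‖b‖^2 := by nlinarith
    set s : ℝ := Real.sqrt (‖a‖^2 - x^2) with hsdef
    set ε : ℝ := if 0 ≤ g then 1 else -1 with hεdef
    set t : ℝ := ε * Real.sqrt (‖b‖^2 - y^2) with htdef
    have hs2 : s^2 = ‖a‖^2 - x^2 := Real.sq_sqrt (by linarith)
    have hε2 : ε^2 = 1 := by rw [hεdef]; split <;> norm_num
    have ht2 : t^2 = ‖b‖^2 - y^2 := by
      rw [htdef, mul_pow, hε2, one_mul, Real.sq_sqrt (by linarith)]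
    have hgst : g * (s * t) = |g| * Real.sqrt ((‖a‖^2 - x^2) * (‖b‖^2 - y^2)) := by
      rw [Real.sqrt_mul (by linarith), htdef, hsdef]
      rcases le_or_gt 0 g with h | h
      · rw [hεdef, if_pos h, abs_of_nonneg h]; ring
      · rw [hεdef, if_neg (not_le.mpr h), abs_of_neg h]; ring
    have hQ : ‖b‖^2*s^2 - 2*g*s*t + ‖a‖^2*t^2 ≤ ‖a‖^2*‖b‖^2 - g^2 := by
      have : 2*g*s*t = 2*(g*(s*t)) := by ring
      rw [hs2, ht2, this, hgst]
      nlinarith [hineq]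
    set D : ℝ := ‖a‖^2*‖b‖^2 - g^2 with hDdef
    set α : ℝ := (‖b‖^2*s - g*t)/D with hαdef
    set β : ℝ := (‖a‖^2*t - g*s)/D with hβdef
    have hDne : (a 0^2+a 1^2+a 2^2)*(b 0^2+b 1^2+b 2^2) - (a 0*b 0+a 1*b 1+a 2*b 2)^2 ≠ 0 := by
      rw [← inner_E3 a b, ← hA2, ← hB2]
      have h' := hD
      rw [hDdef, hgdef] at h'
      exact h'.ne'
    set r1 : ℝ := α*a 0 + β*b 0 with hr1def
    set r2 : ℝ := α*a 1 + β*b 1 with hr2def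
    set r3 : ℝ := α*a 2 + β*b 2 with hr3def
    have hs : a 0 * r1 + a 1 * r2 + a 2 * r3 = s := by
      rw [hr1def, hr2def, hr3def, hαdef, hβdef, hDdef, hgdef, hA2, hB2, inner_E3 a b]
      have hinv := mul_inv_cancel₀ hDne
      simp only [div_eq_mul_inv]
      linear_combination s * hinv
    have ht : b 0 * r1 + b 1 * r2 + b 2 * r3 = t := by
      rw [hr1def, hr2def, hr3def, hαdef, hβdef, hDdef, hgdef, hA2, hB2, inner_E3 a b]
      have hinv := mul_inv_cancel₀ hDne
      simp only [div_eq_mul_inv]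
      linear_combination t * hinv
    have hrr : r1^2 + r2^2 + r3^2 = (‖b‖^2*s^2 - 2*g*s*t + ‖a‖^2*t^2)/D := by
      rw [hr1def, hr2def, hr3def, hαdef, hβdef, hDdef, hgdef, hA2, hB2, inner_E3 a b]
      have hinv := mul_inv_cancel₀ hDne
      simp only [div_eq_mul_inv]
      linear_combination (((b 0^2+b 1^2+b 2^2)*s^2 - 2*(a 0*b 0+a 1*b 1+a 2*b 2)*s*t + (a 0^2+a 1^2+a 2^2)*t^2) * ((a 0^2+a 1^2+a 2^2)*(b 0^2+b 1^2+b 2^2) - (a 0*b 0+a 1*b 1+a 2*b 2)^2)⁻¹) * hinv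
    have hr : r1^2 + r2^2 + r3^2 ≤ 1 := by
      rw [hrr, div_le_one hD]
      exact hQ
    refine ⟨rhoB r1 r2 r3, ⟨rhoB_posSemidef r1 r2 r3 hr, rhoB_trace r1 r2 r3⟩, ?_⟩
    have huA : uncertainty (qObs a0 a) (rhoB r1 r2 r3) = x := by
      rw [uncertainty, var_rhoB, hs, ← hA2]
      have : ‖a‖^2 - s^2 = x^2 := by rw [hs2]; ring
      rw [this, Real.sqrt_sq hx0]
    have huB : uncertainty (qObs b0 b) (rhoB r1 r2 r3) = y := by
      rw [uncertainty, var_rhoB, ht, ← hB2]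
      have : ‖b‖^2 - t^2 = y^2 := by rw [ht2]; ring
      rw [this, Real.sqrt_sq hy0]
    rw [huA, huB]

end
end

section
/- Let θ ∈ (0, π/2] and let A = a₀·I + a·σ, B = b₀·I + b·σ, C = c₀·I + c·σ be qubit observables whose Bloch vectors a,b,c ∈ ℝ³ are unit vectors with ⟨a,b⟩ = ⟨a,c⟩ = ⟨b,c⟩ = cos θ. Then the Gram matrix T_{a,b,c} has eigenvalues 1−cos θ (with multiplicity two) and 1+2cos θ, and for every qubit density matrix ρ one has (Δ_ρA)² + (Δ_ρB)² + (Δ_ρC)² ≥ 2(1 − cos θ); moreover equality is attained by some qubit density matrix. -/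
open Matrix MeasureTheory Filter Set
open scoped RealInnerProductSpace Kronecker ComplexOrder

noncomputable section

/-! ### Auxiliary lemmas -/


lemma aux_charpoly_conj {n R : Type*} [CommRing R] [Fintype n] [DecidableEq n]
    (U V D : Matrix n n R) (hUV : U * V = 1) (hVU : V * U = 1) :
    (U * D * V).charpoly = D.charpoly := by
  unfold Matrix.charpoly
  have h : charmatrix (U * D * V) = U.map Polynomial.C * charmatrix D * V.map Polynomial.C := by
    unfold charmatrix
    rw [Matrix.mul_sub, Matrix.sub_mul]
    congr 1
    · rw [Matrix.mul_assoc,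
        Matrix.scalar_commute Polynomial.X (fun r => (Commute.all Polynomial.X r)),
        ← Matrix.mul_assoc, ← Matrix.map_mul, hUV]
      simp
    · simp only [RingHom.mapMatrix_apply, ← Matrix.map_mul]
  rw [h, det_mul, det_mul, mul_comm, ← mul_assoc, ← det_mul, ← Matrix.map_mul, hVU]
  simp

lemma aux_charpoly_diag {n R : Type*} [CommRing R] [Fintype n] [DecidableEq n] (d : n → R) :
    (diagonal d).charpoly = ∏ i, (Polynomial.X - Polynomial.C (d i)) := by
  unfold Matrix.charpoly
  have h : charmatrix (diagonal d)
      = diagonal (fun i => Polynomial.X - Polynomial.C (d i)) := by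
    ext i j
    by_cases h : i = j <;> simp [h, charmatrix_apply_eq, charmatrix_apply_ne, Matrix.diagonal]
  rw [h, det_diagonal]

lemma aux_inner_coords (u v : E3) : (inner ℝ u v : ℝ) = u 0 * v 0 + u 1 * v 1 + u 2 * v 2 := by
  simp [PiLp.inner_apply, RCLike.inner_apply, Fin.sum_univ_three, mul_comm]

lemma aux_sum_sq_of_norm_one (a : E3) (ha : ‖a‖ = 1) : (a 0)^2 + (a 1)^2 + (a 2)^2 = 1 := by
  have h : (inner ℝ a a : ℝ) = 1 := by
    rw [real_inner_self_eq_norm_mul_norm, ha]; norm_num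
  rw [aux_inner_coords] at h
  nlinarith [h]

lemma aux_qObs_split (a0 : ℝ) (a : E3) : qObs a0 a = (a0:ℂ) • 1 + qObs 0 a := by
  simp [qObs]
  abel

lemma aux_qObs_sq (a : E3) (ha : (a 0)^2 + (a 1)^2 + (a 2)^2 = 1) :
    qObs 0 a * qObs 0 a = 1 := by
  have haC : ((a 0 : ℂ))^2 + (a 1 : ℂ)^2 + (a 2 : ℂ)^2 = 1 := by
    have := congrArg (fun x : ℝ => (x : ℂ)) ha; push_cast at this; exact this
  ext i j
  fin_cases i <;> fin_cases j <;>
    simp [qObs, pauli1, pauli2, pauli3, Matrix.mul_apply, Fin.sum_univ_two,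
      Matrix.one_apply] <;>
    first
      | linear_combination haC
      | linear_combination -haC
      | linear_combination (-(a 1:ℂ)^2) * Complex.I_sq
      | linear_combination ((a 1:ℂ)^2) * Complex.I_sq
      | linear_combination haC - (a 1:ℂ)^2 * Complex.I_sq
      | linear_combination haC + (a 1:ℂ)^2 * Complex.I_sq
      | linear_combination -haC - (a 1:ℂ)^2 * Complex.I_sq
      | linear_combination -haC + (a 1:ℂ)^2 * Complex.I_sq
      | ring

lemma aux_trace_S (a : E3) (ρ : Matrix (Fin 2) (Fin 2) ℂ) (hherm : ρ.IsHermitian) :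
    (Matrix.trace (qObs 0 a * ρ)).re
      = a 0 * (2*(ρ 0 1).re) + a 1 * (-2*(ρ 0 1).im) + a 2 * ((ρ 0 0).re - (ρ 1 1).re) := by
  have h10 : ρ 1 0 = (starRingEnd ℂ) (ρ 0 1) := by
    conv_lhs => rw [← hherm]
    rfl
  simp [Matrix.trace_fin_two, Matrix.mul_apply, Fin.sum_univ_two, qObs, pauli1, pauli2, pauli3,
    h10, Matrix.vecMul, dotProduct, Matrix.vecHead, Matrix.vecTail, Complex.mul_re, Complex.add_re]
  ring

lemma aux_variance_eq (a0 : ℝ) (a : E3) (ha : (a 0)^2 + (a 1)^2 + (a 2)^2 = 1)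
    (ρ : Matrix (Fin 2) (Fin 2) ℂ) (htr : ρ.trace = 1) :
    variance (qObs a0 a) ρ = 1 - ((Matrix.trace (qObs 0 a * ρ)).re)^2 := by
  have hsq : qObs a0 a * qObs a0 a = ((a0^2+1 : ℝ):ℂ) • 1 + ((2*a0 : ℝ):ℂ) • qObs 0 a := by
    rw [aux_qObs_split]
    rw [add_mul, mul_add, mul_add, aux_qObs_sq a ha]
    simp only [smul_mul_assoc, mul_smul_comm, one_mul, mul_one, smul_smul]
    push_cast
    module
  have hmean : (Matrix.trace (qObs a0 a * ρ)).re = a0 + (Matrix.trace (qObs 0 a * ρ)).re := by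
    rw [aux_qObs_split, add_mul, smul_mul_assoc, one_mul, Matrix.trace_add,
      Matrix.trace_smul, htr]
    simp
  have hA2 : (Matrix.trace (qObs a0 a * qObs a0 a * ρ)).re
      = (a0^2+1) + (2*a0) * (Matrix.trace (qObs 0 a * ρ)).re := by
    rw [hsq, add_mul, smul_mul_assoc, smul_mul_assoc, one_mul, Matrix.trace_add,
      Matrix.trace_smul, Matrix.trace_smul, htr]
    simp [smul_eq_mul, Complex.mul_re, ← Complex.ofReal_pow]
  unfold variance mean
  rw [hA2, hmean]
  ring

lemma aux_bloch_le (ρ : Matrix (Fin 2) (Fin 2) ℂ) (hpsd : ρ.PosSemidef) (htr : ρ.trace = 1) :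
    (2*(ρ 0 1).re)^2 + (-2*(ρ 0 1).im)^2 + ((ρ 0 0).re - (ρ 1 1).re)^2 ≤ 1 := by
  have hherm := hpsd.1
  have h10 : ρ 1 0 = (starRingEnd ℂ) (ρ 0 1) := by
    conv_lhs => rw [← hherm]
    rfl
  have htr2 : (ρ 0 0).re + (ρ 1 1).re = 1 := by
    have := congrArg Complex.re htr
    simpa [Matrix.trace_fin_two] using this
  have hdet : 0 ≤ (ρ.det).re := by
    rw [hherm.det_eq_prod_eigenvalues]
    have h0 := hpsd.eigenvalues_nonneg 0
    have h1 := hpsd.eigenvalues_nonneg 1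
    simp [Fin.prod_univ_two, ← Complex.ofReal_mul]
    positivity
  rw [Matrix.det_fin_two, h10] at hdet
  have him0 : (ρ 0 0).im = 0 := Complex.conj_eq_iff_im.mp (congrFun (congrFun hherm 0) 0)
  have him1 : (ρ 1 1).im = 0 := Complex.conj_eq_iff_im.mp (congrFun (congrFun hherm 1) 1)
  simp [Complex.sub_re, Complex.mul_re, him0, him1] at hdet
  nlinarith [hdet, htr2]

lemma aux_key_ineq (k : ℝ) (hk : 0 ≤ k) (a b c r : E3)
    (haa : (inner ℝ a a : ℝ) = 1) (hbb : (inner ℝ b b : ℝ) = 1) (hcc : (inner ℝ c c : ℝ) = 1)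
    (hab : (inner ℝ a b : ℝ) = k) (hac : (inner ℝ a c : ℝ) = k) (hbc : (inner ℝ b c : ℝ) = k)
    (hrr : (inner ℝ r r : ℝ) ≤ 1) :
    (inner ℝ a r : ℝ)^2 + (inner ℝ b r : ℝ)^2 + (inner ℝ c r : ℝ)^2 ≤ 1 + 2*k := by
  set x : ℝ := inner ℝ a r with hx
  set y : ℝ := inner ℝ b r with hy
  set z : ℝ := inner ℝ c r with hz
  set s : E3 := x • a + y • b + z • c with hs
  have hsr : (inner ℝ s r : ℝ) = x^2 + y^2 + z^2 := by
    simp only [hs, inner_add_left, real_inner_smul_left, ← hx, ← hy, ← hz]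
    ring
  have hss : (inner ℝ s s : ℝ) = (x^2+y^2+z^2) + 2*k*(x*y+x*z+y*z) := by
    simp only [hs, inner_add_left, inner_add_right, real_inner_smul_left,
      real_inner_smul_right, haa, hbb, hcc, hab, hac, hbc]
    rw [show (inner ℝ b a : ℝ) = k from (real_inner_comm a b) ▸ hab,
      show (inner ℝ c a : ℝ) = k from (real_inner_comm a c) ▸ hac,
      show (inner ℝ c b : ℝ) = k from (real_inner_comm b c) ▸ hbc]
    ring
  have hcs := real_inner_mul_inner_self_le s r
  have h0 : 0 ≤ (inner ℝ r r : ℝ) := real_inner_self_nonneg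
  have h0s : 0 ≤ (inner ℝ s s : ℝ) := real_inner_self_nonneg
  have hQ2 : (x^2+y^2+z^2)^2 ≤ ((x^2+y^2+z^2) + 2*k*(x*y+x*z+y*z)) := by
    nlinarith [hcs, hsr, hss, h0, hrr, h0s]
  nlinarith [hQ2, sq_nonneg (x-y), sq_nonneg (x-z), sq_nonneg (y-z), sq_nonneg x, sq_nonneg y,
    sq_nonneg z, sq_nonneg (x^2+y^2+z^2), hk, mul_nonneg hk (sq_nonneg (x+y+z))]

/-- the pure state with Bloch vector (u,v,w), u²+v²+w² = 1 -/
def blochState (u v w : ℝ) : Matrix (Fin 2) (Fin 2) ℂ :=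
  !![(((1 + w)/2 : ℝ) : ℂ), ((u:ℂ) - (v:ℂ)*Complex.I)/2;
     ((u:ℂ) + (v:ℂ)*Complex.I)/2, (((1 - w)/2 : ℝ) : ℂ)]

lemma blochState_trace (u v w : ℝ) : (blochState u v w).trace = 1 := by
  simp [blochState, Matrix.trace_fin_two]
  push_cast
  ring

lemma blochState_herm (u v w : ℝ) : (blochState u v w).IsHermitian := by
  ext i j
  fin_cases i <;> fin_cases j <;>
    simp [blochState, Matrix.conjTranspose_apply, Complex.ext_iff]

lemma blochState_psd (u v w : ℝ) (h : u^2+v^2+w^2 = 1) : (blochState u v w).PosSemidef := by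
  have hC : (u:ℂ)^2+(v:ℂ)^2+(w:ℂ)^2 = 1 := by exact_mod_cast h
  have hsq : blochState u v w * blochState u v w = blochState u v w := by
    ext i j
    fin_cases i <;> fin_cases j <;>
      (simp [blochState, Matrix.mul_apply, Fin.sum_univ_two];
       first
        | linear_combination (1/4 : ℂ) * hC - ((v:ℂ)^2/4) * Complex.I_sq
        | linear_combination (1/4 : ℂ) * hC + ((v:ℂ)^2/4) * Complex.I_sq
        | linear_combination (-(1/4) : ℂ) * hC - ((v:ℂ)^2/4) * Complex.I_sq
        | linear_combination (-(1/4) : ℂ) * hC + ((v:ℂ)^2/4) * Complex.I_sq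
        | linear_combination (((u:ℂ) - (v:ℂ)*Complex.I)/4) * hC
        | linear_combination (((u:ℂ) + (v:ℂ)*Complex.I)/4) * hC
        | ring)
  have hps := Matrix.posSemidef_conjTranspose_mul_self (blochState u v w)
  rwa [blochState_herm u v w, hsq] at hps


set_option maxHeartbeats 2000000 in
/-- three unit Bloch vectors with pairwise angle θ: spectrum of the Gram matrix
and the tight uncertainty bound 2(1 − cos θ). -/
theorem three_observables_equal_angles
    (θ a0 b0 c0 : ℝ) (hθ : θ ∈ Set.Ioc 0 (Real.pi / 2)) (a b c : E3)
    (ha : ‖a‖ = 1) (hb : ‖b‖ = 1) (hc : ‖c‖ = 1)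
    (hab : (inner ℝ a b : ℝ) = Real.cos θ)
    (hac : (inner ℝ a c : ℝ) = Real.cos θ)
    (hbc : (inner ℝ b c : ℝ) = Real.cos θ) :
    (Finset.univ.val.map (gram_isHermitian ![a, b, c]).eigenvalues
        = ({1 - Real.cos θ, 1 - Real.cos θ, 1 + 2 * Real.cos θ} : Multiset ℝ)) ∧
    (∀ ρ : Matrix (Fin 2) (Fin 2) ℂ, IsDensityMatrix ρ →
        variance (qObs a0 a) ρ + variance (qObs b0 b) ρ + variance (qObs c0 c) ρ
          ≥ 2 * (1 - Real.cos θ)) ∧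
    (∃ ρ : Matrix (Fin 2) (Fin 2) ℂ, IsDensityMatrix ρ ∧
        variance (qObs a0 a) ρ + variance (qObs b0 b) ρ + variance (qObs c0 c) ρ
          = 2 * (1 - Real.cos θ)) := by
  obtain ⟨hθ0, hθ2⟩ := hθ
  set k : ℝ := Real.cos θ with hkdef
  have hk0 : 0 ≤ k := Real.cos_nonneg_of_mem_Icc
    ⟨by nlinarith [Real.pi_pos], hθ2⟩
  have haa : (inner ℝ a a : ℝ) = 1 := by
    rw [real_inner_self_eq_norm_mul_norm, ha]; norm_num
  have hbb : (inner ℝ b b : ℝ) = 1 := by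
    rw [real_inner_self_eq_norm_mul_norm, hb]; norm_num
  have hcc : (inner ℝ c c : ℝ) = 1 := by
    rw [real_inner_self_eq_norm_mul_norm, hc]; norm_num
  have hba : (inner ℝ b a : ℝ) = k := by rw [real_inner_comm]; exact hab
  have hca : (inner ℝ c a : ℝ) = k := by rw [real_inner_comm]; exact hac
  have hcb : (inner ℝ c b : ℝ) = k := by rw [real_inner_comm]; exact hbc
  have hasq := aux_sum_sq_of_norm_one a ha
  have hbsq := aux_sum_sq_of_norm_one b hb
  have hcsq := aux_sum_sq_of_norm_one c hc
  refine ⟨?_, ?_, ?_⟩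
  · -- eigenvalues
    have hGmat : gram ![a,b,c] = !![1,k,k;k,1,k;k,k,1] := by
      ext i j
      fin_cases i <;> fin_cases j <;>
        simp only [_root_.gram, Matrix.of_apply, Matrix.cons_val', Matrix.cons_val_zero,
          Matrix.cons_val_one, Matrix.head_cons, Matrix.empty_val', Matrix.cons_val_fin_one,
          Matrix.head_fin_const, Matrix.cons_val_two, Matrix.tail_cons, Matrix.vecHead,
          Matrix.vecTail, Fin.isValue] <;>
        first
          | exact haa | exact hbb | exact hcc | exact hab | exact hac | exact hbc
          | exact hba | exact hca | exact hcb
    set hG := gram_isHermitian ![a,b,c] with hGdef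
    have hch : (gram ![a,b,c]).charpoly
        = (Polynomial.X - Polynomial.C (1-k))^2 * (Polynomial.X - Polynomial.C (1+2*k)) := by
      rw [hGmat, Matrix.charpoly, Matrix.det_fin_three]
      simp [charmatrix_apply_eq, charmatrix_apply_ne, Matrix.vecHead, Matrix.vecTail]
      simp only [map_sub, map_add, _root_.map_one, _root_.map_mul, map_ofNat]
      ring
    have hspec := hG.spectral_theorem
    have hU1 : (hG.eigenvectorUnitary : Matrix (Fin 3) (Fin 3) ℝ)
        * star (hG.eigenvectorUnitary : Matrix (Fin 3) (Fin 3) ℝ) = 1 :=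
      Matrix.mem_unitaryGroup_iff.mp hG.eigenvectorUnitary.2
    have hU2 : star (hG.eigenvectorUnitary : Matrix (Fin 3) (Fin 3) ℝ)
        * (hG.eigenvectorUnitary : Matrix (Fin 3) (Fin 3) ℝ) = 1 :=
      Matrix.mem_unitaryGroup_iff'.mp hG.eigenvectorUnitary.2
    have hcp2 : (gram ![a,b,c]).charpoly
        = ∏ i, (Polynomial.X - Polynomial.C (hG.eigenvalues i)) := by
      conv_lhs => rw [hspec, Unitary.conjStarAlgAut_apply]
      rw [aux_charpoly_conj _ _ _ hU1 hU2]
      have h : (RCLike.ofReal ∘ hG.eigenvalues : Fin 3 → ℝ) = hG.eigenvalues := by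
        ext i; simp [Function.comp]
      rw [h, aux_charpoly_diag]
    have key : ((Finset.univ.val.map hG.eigenvalues).map
          (fun a => Polynomial.X - Polynomial.C a)).prod
        = (({1-k,1-k,1+2*k} : Multiset ℝ).map
          (fun a => Polynomial.X - Polynomial.C a)).prod := by
      rw [Multiset.map_map]
      simp only [Function.comp]
      have h : ((Finset.univ.val.map
            (fun i => Polynomial.X - Polynomial.C (hG.eigenvalues i))).prod : Polynomial ℝ)
          = ∏ i, (Polynomial.X - Polynomial.C (hG.eigenvalues i)) := rfl
      rw [h, ← hcp2, hch]
      simp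
      ring
    have hroots := congrArg Polynomial.roots key
    rwa [Polynomial.roots_multiset_prod_X_sub_C, Polynomial.roots_multiset_prod_X_sub_C]
      at hroots
  · -- the bound
    intro ρ hρ
    set rv : E3 := WithLp.toLp 2 ![2*(ρ 0 1).re, -2*(ρ 0 1).im, (ρ 0 0).re - (ρ 1 1).re] with hrv
    have hrv0 : rv 0 = 2*(ρ 0 1).re := rfl
    have hrv1 : rv 1 = -2*(ρ 0 1).im := rfl
    have hrv2 : rv 2 = (ρ 0 0).re - (ρ 1 1).re := rfl
    have hrr : (inner ℝ rv rv : ℝ) ≤ 1 := by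
      rw [aux_inner_coords, hrv0, hrv1, hrv2]
      nlinarith [aux_bloch_le ρ hρ.1 hρ.2]
    have hta : (Matrix.trace (qObs 0 a * ρ)).re = (inner ℝ a rv : ℝ) := by
      rw [aux_trace_S a ρ hρ.1.1, aux_inner_coords, hrv0, hrv1, hrv2]
    have htb : (Matrix.trace (qObs 0 b * ρ)).re = (inner ℝ b rv : ℝ) := by
      rw [aux_trace_S b ρ hρ.1.1, aux_inner_coords, hrv0, hrv1, hrv2]
    have htc : (Matrix.trace (qObs 0 c * ρ)).re = (inner ℝ c rv : ℝ) := by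
      rw [aux_trace_S c ρ hρ.1.1, aux_inner_coords, hrv0, hrv1, hrv2]
    rw [aux_variance_eq a0 a hasq ρ hρ.2, aux_variance_eq b0 b hbsq ρ hρ.2,
      aux_variance_eq c0 c hcsq ρ hρ.2, hta, htb, htc]
    have := aux_key_ineq k hk0 a b c rv haa hbb hcc hab hac hbc hrr
    linarith
  · -- equality
    have hn2 : ‖a+b+c‖^2 = 3+6*k := by
      rw [← real_inner_self_eq_norm_sq]
      simp only [inner_add_left, inner_add_right, haa, hbb, hcc, hab, hac, hbc, hba, hca, hcb]
      ring
    have hnpos : (0:ℝ) < ‖a+b+c‖ := by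
      nlinarith [norm_nonneg (a+b+c), hk0]
    have hnne : ‖a+b+c‖ ≠ 0 := ne_of_gt hnpos
    set r : E3 := ‖a+b+c‖⁻¹ • (a+b+c) with hrdef
    have hia : (inner ℝ a r : ℝ) = ‖a+b+c‖⁻¹ * (1+2*k) := by
      rw [hrdef, real_inner_smul_right]
      simp only [inner_add_right, haa, hab, hac]
      ring
    have hib : (inner ℝ b r : ℝ) = ‖a+b+c‖⁻¹ * (1+2*k) := by
      rw [hrdef, real_inner_smul_right]
      simp only [inner_add_right, hba, hbb, hbc]
      ring
    have hic : (inner ℝ c r : ℝ) = ‖a+b+c‖⁻¹ * (1+2*k) := by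
      rw [hrdef, real_inner_smul_right]
      simp only [inner_add_right, hca, hcb, hcc]
      ring
    have hrr1 : (inner ℝ r r : ℝ) = 1 := by
      rw [hrdef, real_inner_smul_right, real_inner_smul_left, real_inner_self_eq_norm_sq]
      field_simp
    have hrsq : (r 0)^2 + (r 1)^2 + (r 2)^2 = 1 := by
      have h := hrr1
      rw [aux_inner_coords] at h
      nlinarith [h]
    have hxval : (inner ℝ a r : ℝ)^2 + (inner ℝ b r : ℝ)^2 + (inner ℝ c r : ℝ)^2 = 1+2*k := by
      rw [hia, hib, hic]
      have h2 : ‖a+b+c‖^2 = 3+6*k := hn2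
      field_simp
      nlinarith [h2]
    refine ⟨blochState (r 0) (r 1) (r 2),
      ⟨blochState_psd _ _ _ hrsq, blochState_trace _ _ _⟩, ?_⟩
    set ρ := blochState (r 0) (r 1) (r 2) with hρdef
    have he01re : (ρ 0 1).re = (r 0)/2 := by simp [hρdef, blochState]
    have he01im : (ρ 0 1).im = -(r 1)/2 := by simp [hρdef, blochState]
    have he00 : (ρ 0 0).re = (1 + r 2)/2 := by simp [hρdef, blochState]
    have he11 : (ρ 1 1).re = (1 - r 2)/2 := by simp [hρdef, blochState]
    have hherm := blochState_herm (r 0) (r 1) (r 2)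
    have htr := blochState_trace (r 0) (r 1) (r 2)
    have hta : (Matrix.trace (qObs 0 a * ρ)).re = (inner ℝ a r : ℝ) := by
      rw [aux_trace_S a ρ hherm, aux_inner_coords, he01re, he01im, he00, he11]
      ring
    have htb : (Matrix.trace (qObs 0 b * ρ)).re = (inner ℝ b r : ℝ) := by
      rw [aux_trace_S b ρ hherm, aux_inner_coords, he01re, he01im, he00, he11]
      ring
    have htc : (Matrix.trace (qObs 0 c * ρ)).re = (inner ℝ c r : ℝ) := by
      rw [aux_trace_S c ρ hherm, aux_inner_coords, he01re, he01im, he00, he11]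
      ring
    rw [aux_variance_eq a0 a hasq ρ htr, aux_variance_eq b0 b hbsq ρ htr,
      aux_variance_eq c0 c hcsq ρ htr, hta, htb, htc]
    linarith [hxval]

end
end

section
/- Let α ∈ (0, π/2] and let A = a₀·I + a·σ, B = b₀·I + b·σ, C = c₀·I + c·σ be qubit observables whose Bloch vectors a,b,c ∈ ℝ³ are unit vectors with ⟨a,b⟩ = ⟨a,c⟩ = 0 and ⟨b,c⟩ = cos α. Then the Gram matrix T_{a,b,c} has eigenvalues 1, 1−cos α and 1+cos α, and for every qubit density matrix ρ one has (Δ_ρA)² + (Δ_ρB)² + (Δ_ρC)² ≥ 2 − cos α; moreover equality is attained by some qubit density matrix. -/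
open Matrix MeasureTheory Filter Set
open scoped RealInnerProductSpace Kronecker ComplexOrder

noncomputable section

section Aux
open Polynomial

variable {n : Type*} [Fintype n] [DecidableEq n]

lemma charpoly_conj_aux (U D V : Matrix n n ℝ) (h : U * V = 1) :
    (U * D * V).charpoly = D.charpoly := by
  have hcm : charmatrix (U * D * V)
      = (U.map C) * charmatrix D * (V.map C) := by
    rw [charmatrix, charmatrix, mul_sub, sub_mul]
    congr 1
    · symm
      rw [scalar_apply, mul_assoc, ← smul_eq_diagonal_mul, Matrix.mul_smul, ← Matrix.map_mul, h]
      simp [smul_eq_diagonal_mul]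
    · rw [RingHom.mapMatrix_apply, RingHom.mapMatrix_apply, ← Matrix.map_mul, ← Matrix.map_mul]
  rw [Matrix.charpoly, hcm, det_mul, det_mul, Matrix.charpoly]
  have : (U.map C).det * (V.map C).det = 1 := by
    rw [← det_mul, ← Matrix.map_mul, h]
    simp
  ring_nf
  rw [mul_comm ((U.map C).det) _, mul_assoc, this, mul_one]

lemma charpoly_diagonal_aux (d : n → ℝ) :
    (diagonal d).charpoly = ∏ i, (X - C (d i)) := by
  have : charmatrix (diagonal d) = diagonal (fun i => X - C (d i)) := by
    ext i j
    by_cases hij : i = j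
    · subst hij; simp [charmatrix_apply_eq]
    · simp [charmatrix_apply_ne _ _ _ hij, diagonal_apply_ne _ hij]
  rw [Matrix.charpoly, this, det_diagonal]

lemma herm_charpoly (A : Matrix n n ℝ) (hA : A.IsHermitian) :
    A.charpoly = ∏ i, (X - C (hA.eigenvalues i)) := by
  have hs := hA.spectral_theorem
  have hu : (hA.eigenvectorUnitary : Matrix n n ℝ) * star (hA.eigenvectorUnitary : Matrix n n ℝ) = 1 :=
    (Matrix.mem_unitaryGroup_iff).mp hA.eigenvectorUnitary.2
  calc A.charpoly = ((hA.eigenvectorUnitary : Matrix n n ℝ) * Matrix.diagonal (RCLike.ofReal ∘ hA.eigenvalues)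
      * star (hA.eigenvectorUnitary : Matrix n n ℝ)).charpoly := by rw [Unitary.conjStarAlgAut_apply] at hs; rw [← hs]
    _ = (Matrix.diagonal (RCLike.ofReal ∘ hA.eigenvalues)).charpoly := charpoly_conj_aux _ _ _ hu
    _ = ∏ i, (X - C (hA.eigenvalues i)) := by
        rw [charpoly_diagonal_aux]
        simp

lemma cpoly (t : ℝ) :
    Matrix.charpoly (!![1,0,0;0,1,t;0,t,1] : Matrix (Fin 3) (Fin 3) ℝ)
      = (({1, 1 - t, 1 + t} : Multiset ℝ).map fun a => X - C a).prod := by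
  have hcm : charmatrix (!![1,0,0;0,1,t;0,t,1] : Matrix (Fin 3) (Fin 3) ℝ)
      = !![X - 1, 0, 0; 0, X - 1, -C t; 0, -C t, X - 1] := by
    refine Matrix.ext fun i j => ?_
    fin_cases i <;> fin_cases j <;>
      simp [charmatrix_apply, Matrix.diagonal, Matrix.vecHead, Matrix.vecTail]
  rw [Matrix.charpoly, hcm, Matrix.det_fin_three]
  simp [Multiset.insert_eq_cons, map_sub, map_add, _root_.map_one]
  ring


theorem part1
    (α : ℝ) (a b c : E3)
    (ha : ‖a‖ = 1) (hb : ‖b‖ = 1) (hc : ‖c‖ = 1)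
    (hab : (inner ℝ a b : ℝ) = 0)
    (hac : (inner ℝ a c : ℝ) = 0)
    (hbc : (inner ℝ b c : ℝ) = Real.cos α) :
    (Finset.univ.val.map (gram_isHermitian ![a, b, c]).eigenvalues
        = ({1, 1 - Real.cos α, 1 + Real.cos α} : Multiset ℝ)) := by
  set t := Real.cos α
  have haa : (inner ℝ a a : ℝ) = 1 := by
    rw [real_inner_self_eq_norm_mul_norm, ha]; ring
  have hbb : (inner ℝ b b : ℝ) = 1 := by
    rw [real_inner_self_eq_norm_mul_norm, hb]; ring
  have hcc : (inner ℝ c c : ℝ) = 1 := by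
    rw [real_inner_self_eq_norm_mul_norm, hc]; ring
  have hba : (inner ℝ b a : ℝ) = 0 := by rw [real_inner_comm]; exact hab
  have hca : (inner ℝ c a : ℝ) = 0 := by rw [real_inner_comm]; exact hac
  have hcb : (inner ℝ c b : ℝ) = t := by rw [real_inner_comm]; exact hbc
  have hG : gram ![a,b,c] = !![1,0,0;0,1,t;0,t,1] := by
    refine Matrix.ext fun i j => ?_
    fin_cases i <;> fin_cases j <;>
      simp [_root_.gram, haa, hbb, hcc, hab, hac, hbc, hba, hca, hcb, ha, hb, hc,
        Matrix.vecHead, Matrix.vecTail]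
  have h1 : (gram ![a,b,c]).charpoly
      = ((Finset.univ.val.map (gram_isHermitian ![a,b,c]).eigenvalues).map
          fun r => X - C r).prod := by
    rw [herm_charpoly _ (gram_isHermitian ![a,b,c])]
    simp [Finset.prod, Multiset.map_map]
  have h2 : (gram ![a,b,c]).charpoly
      = (({1, 1 - t, 1 + t} : Multiset ℝ).map fun r => X - C r).prod := by
    rw [hG]; exact cpoly t
  have := (roots_multiset_prod_X_sub_C
      (Finset.univ.val.map (gram_isHermitian ![a,b,c]).eigenvalues)).symm.trans
    (by rw [← h1, h2, roots_multiset_prod_X_sub_C])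
  exact this

-- entries of qObs
lemma qObs_entries (a0 : ℝ) (a : E3) :
    qObs a0 a = !![(a0 : ℂ) + (a 2 : ℂ), (a 0 : ℂ) - Complex.I * (a 1 : ℂ);
                   (a 0 : ℂ) + Complex.I * (a 1 : ℂ), (a0 : ℂ) - (a 2 : ℂ)] := by
  refine Matrix.ext fun i j => ?_
  fin_cases i <;> fin_cases j <;>
    simp [qObs, pauli1, pauli2, pauli3, Matrix.one_apply] <;> ring

lemma trace_qObs (a0 : ℝ) (a : E3) : (qObs a0 a).trace = 2 * (a0 : ℂ) := by
  rw [qObs_entries, Matrix.trace_fin_two]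
  simp; ring

lemma qObs_herm (a0 : ℝ) (a : E3) : (qObs a0 a)ᴴ = qObs a0 a := by
  rw [qObs_entries]
  refine Matrix.ext fun i j => ?_
  fin_cases i <;> fin_cases j <;>
    simp [Matrix.conjTranspose_apply, Complex.ext_iff]

lemma qObs_sq (a0 : ℝ) (a : E3) :
    qObs a0 a * qObs a0 a
      = qObs (a0 ^ 2 + ((a 0) ^ 2 + (a 1) ^ 2 + (a 2) ^ 2)) ((2 * a0) • a) := by
  rw [qObs_entries, qObs_entries]
  refine Matrix.ext fun i j => ?_
  fin_cases i <;> fin_cases j <;>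
    simp [Matrix.mul_apply, Fin.sum_univ_two, PiLp.smul_apply, smul_eq_mul]
  all_goals ring_nf
  all_goals simp [Complex.I_sq]
  all_goals ring_nf

lemma trace_qObs_mul (a0 : ℝ) (a : E3) (ρ : Matrix (Fin 2) (Fin 2) ℂ) :
    Matrix.trace (qObs a0 a * ρ)
      = (a0 : ℂ) * ρ.trace + (a 0 : ℂ) * (pauli1 * ρ).trace
        + (a 1 : ℂ) * (pauli2 * ρ).trace + (a 2 : ℂ) * (pauli3 * ρ).trace := by
  simp [qObs, add_mul, Matrix.smul_mul, Matrix.trace_add, Matrix.trace_smul, smul_eq_mul]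

lemma variance_qObs (a0 : ℝ) (a : E3)
    (hnorm : (a 0) ^ 2 + (a 1) ^ 2 + (a 2) ^ 2 = 1)
    (ρ : Matrix (Fin 2) (Fin 2) ℂ) (htr : ρ.trace = 1) :
    variance (qObs a0 a) ρ
      = 1 - (a 0 * ((pauli1 * ρ).trace).re + a 1 * ((pauli2 * ρ).trace).re
          + a 2 * ((pauli3 * ρ).trace).re) ^ 2 := by
  set R1 := ((pauli1 * ρ).trace).re
  set R2 := ((pauli2 * ρ).trace).re
  set R3 := ((pauli3 * ρ).trace).re
  have hmean : mean (qObs a0 a) ρ = a0 + (a 0 * R1 + a 1 * R2 + a 2 * R3) := by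
    rw [mean, trace_qObs_mul, htr]
    simp [Complex.add_re, Complex.ofReal_mul, Complex.mul_re, R1, R2, R3]
    ring
  have hsq : (Matrix.trace (qObs a0 a * qObs a0 a * ρ)).re
      = (a0 ^ 2 + 1) + 2 * a0 * (a 0 * R1 + a 1 * R2 + a 2 * R3) := by
    rw [qObs_sq, hnorm, trace_qObs_mul, htr]
    simp [PiLp.smul_apply, smul_eq_mul, Complex.add_re, Complex.mul_re, R1, R2, R3,
      ← Complex.ofReal_pow]
    ring
  rw [variance, hsq, hmean]
  ring

lemma pauli_traces (a0 : ℝ) (x : E3) :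
    ((pauli1 * qObs a0 x).trace = 2 * (x 0 : ℂ))
    ∧ ((pauli2 * qObs a0 x).trace = 2 * (x 1 : ℂ))
    ∧ ((pauli3 * qObs a0 x).trace = 2 * (x 2 : ℂ)) := by
  rw [qObs_entries]
  refine ⟨?_, ?_, ?_⟩ <;>
    simp [pauli1, pauli2, pauli3, Matrix.trace_fin_two, Matrix.vecMul, dotProduct, Matrix.vecHead, Matrix.vecTail, Matrix.mul_apply, Fin.sum_univ_two]
  all_goals ring_nf
  all_goals simp [Complex.I_sq]
  all_goals ring_nf

-- the Bloch vector of a density matrix has norm ≤ 1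
lemma bloch_sq_le_one (ρ : Matrix (Fin 2) (Fin 2) ℂ) (hρ : IsDensityMatrix ρ) :
    ((pauli1 * ρ).trace).re ^ 2 + ((pauli2 * ρ).trace).re ^ 2
      + ((pauli3 * ρ).trace).re ^ 2 ≤ 1 := by
  obtain ⟨hpsd, htr⟩ := hρ
  have hherm := hpsd.1
  have h00 : (ρ 0 0).im = 0 := by
    have := congrFun (congrFun hherm 0) 0
    simp [Matrix.conjTranspose_apply, Complex.ext_iff] at this
    linarith [this]
  have h11 : (ρ 1 1).im = 0 := by
    have := congrFun (congrFun hherm 1) 1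
    simp [Matrix.conjTranspose_apply, Complex.ext_iff] at this
    linarith [this]
  have h01 : ρ 1 0 = (starRingEnd ℂ) (ρ 0 1) := by
    have := congrFun (congrFun hherm 1) 0
    simpa [Matrix.conjTranspose_apply] using this.symm
  have htr' : (ρ 0 0).re + (ρ 1 1).re = 1 := by
    rw [Matrix.trace_fin_two] at htr
    have := congrArg Complex.re htr
    simpa using this
  have hdet : 0 ≤ ρ.det.re := by
    rw [hherm.det_eq_prod_eigenvalues]
    simp only [← RCLike.ofReal_prod]
    have hp : (0:ℝ) ≤ ∏ i, hherm.eigenvalues i :=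
      Finset.prod_nonneg fun i _ => hpsd.eigenvalues_nonneg i
    exact (show ((∏ i, hherm.eigenvalues i : ℝ) : ℂ).re = ∏ i, hherm.eigenvalues i from
      Complex.ofReal_re _) ▸ hp
  have hdet2 : ρ.det.re = (ρ 0 0).re * (ρ 1 1).re - ((ρ 0 1).re ^ 2 + (ρ 0 1).im ^ 2) := by
    rw [Matrix.det_fin_two, h01]
    simp [Complex.mul_re, h00, h11, Complex.conj_re, Complex.conj_im]
    ring
  have hT1 : ((pauli1 * ρ).trace).re = 2 * (ρ 0 1).re := by
    simp [pauli1, Matrix.trace_fin_two, Matrix.vecMul, dotProduct, Matrix.vecHead, Matrix.vecTail, Matrix.mul_apply, Fin.sum_univ_two, h01,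
      Complex.add_re, Complex.conj_re]
    ring
  have hT2 : ((pauli2 * ρ).trace).re = -2 * (ρ 0 1).im := by
    simp [pauli2, Matrix.trace_fin_two, Matrix.vecMul, dotProduct, Matrix.vecHead, Matrix.vecTail, Matrix.mul_apply, Fin.sum_univ_two, h01,
      Complex.add_re, Complex.mul_re, Complex.conj_re, Complex.conj_im]
    ring
  have hT3 : ((pauli3 * ρ).trace).re = (ρ 0 0).re - (ρ 1 1).re := by
    simp [pauli3, Matrix.trace_fin_two, Matrix.vecMul, dotProduct, Matrix.vecHead, Matrix.vecTail, Matrix.mul_apply, Fin.sum_univ_two,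
      Complex.sub_re]
    ring
  rw [hT1, hT2, hT3]
  nlinarith [hdet, hdet2, htr', sq_nonneg ((ρ 0 0).re - (ρ 1 1).re)]

lemma key_ineq (t : ℝ) (ht0 : 0 ≤ t) (ht1 : t < 1) (a b c r : E3)
    (ha : ‖a‖ = 1) (hb : ‖b‖ = 1) (hc : ‖c‖ = 1)
    (hab : (inner ℝ a b : ℝ) = 0) (hac : (inner ℝ a c : ℝ) = 0)
    (hbc : (inner ℝ b c : ℝ) = t) (hr : ‖r‖ ^ 2 ≤ 1) :
    (inner ℝ a r : ℝ) ^ 2 + (inner ℝ b r : ℝ) ^ 2 + (inner ℝ c r : ℝ) ^ 2 ≤ 1 + t := by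
  set s := Real.sqrt (1 - t ^ 2) with hs
  have hs2 : s ^ 2 = 1 - t ^ 2 := Real.sq_sqrt (by nlinarith)
  have hspos : 0 < s := Real.sqrt_pos.mpr (by nlinarith)
  set e3 : E3 := s⁻¹ • (c - t • b) with he3
  have haa : (inner ℝ a a : ℝ) = 1 := by
    rw [real_inner_self_eq_norm_mul_norm, ha]; ring
  have hbb : (inner ℝ b b : ℝ) = 1 := by
    rw [real_inner_self_eq_norm_mul_norm, hb]; ring
  have hcc : (inner ℝ c c : ℝ) = 1 := by
    rw [real_inner_self_eq_norm_mul_norm, hc]; ring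
  have h1 : (inner ℝ a e3 : ℝ) = 0 := by
    rw [he3, real_inner_smul_right, inner_sub_right, real_inner_smul_right, hac, hab]
    ring
  have h2 : (inner ℝ b e3 : ℝ) = 0 := by
    rw [he3, real_inner_smul_right, inner_sub_right, real_inner_smul_right, hbc, hbb]
    ring
  have hcb : (inner ℝ c b : ℝ) = t := by rw [real_inner_comm]; exact hbc
  have h3 : (inner ℝ e3 e3 : ℝ) = 1 := by
    rw [he3, real_inner_smul_right, real_inner_smul_left]
    simp only [inner_sub_left, inner_sub_right, real_inner_smul_left, real_inner_smul_right,
      hcc, hbb, hbc, hcb]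
    rw [show s⁻¹ * (s⁻¹ * (1 - t * t - (t * t - t * (t * 1)))) = (s ^ 2)⁻¹ * (1 - t ^ 2) by ring,
      hs2]
    rw [inv_mul_eq_div, div_self (by nlinarith : (1:ℝ) - t ^ 2 ≠ 0)]
  have h1' : (inner ℝ e3 a : ℝ) = 0 := by rw [real_inner_comm]; exact h1
  have h2' : (inner ℝ e3 b : ℝ) = 0 := by rw [real_inner_comm]; exact h2
  have hba : (inner ℝ b a : ℝ) = 0 := by rw [real_inner_comm]; exact hab
  have he3n : ‖e3‖ = 1 := by
    have := real_inner_self_eq_norm_sq e3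
    rw [h3] at this
    nlinarith [norm_nonneg e3]
  have hon : Orthonormal ℝ ![a, b, e3] := by
    rw [orthonormal_iff_ite]
    intro i j
    fin_cases i <;> fin_cases j <;>
      simp [haa, hbb, hab, hba, h1, h2, h3, h1', h2', -PiLp.inner_apply, ha, hb, he3n]
  have hbessel := hon.sum_inner_products_le (𝕜 := ℝ) r (s := Finset.univ)
  rw [Fin.sum_univ_three] at hbessel
  simp only [Matrix.cons_val_zero, Matrix.cons_val_one, Matrix.head_cons, Matrix.cons_val_two,
    Matrix.tail_cons, Real.norm_eq_abs, sq_abs] at hbessel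
  have hw : (inner ℝ c r : ℝ) = s * (inner ℝ e3 r : ℝ) + t * (inner ℝ b r : ℝ) := by
    rw [he3, real_inner_smul_left, inner_sub_left, real_inner_smul_left]
    field_simp
    ring
  set u := (inner ℝ a r : ℝ)
  set v := (inner ℝ b r : ℝ)
  set z := (inner ℝ e3 r : ℝ)
  have hb1 : u ^ 2 + v ^ 2 + z ^ 2 ≤ 1 := le_trans hbessel hr
  rw [hw]
  nlinarith [sq_nonneg (s * v - (1 + t) * z), mul_nonneg ht0 (sq_nonneg u),
    mul_nonneg ht0 (sq_nonneg (v - z)), hs2, hb1,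
    mul_nonneg ht0 (sub_nonneg.mpr hb1)]

lemma inner_coords (a r : E3) :
    (inner ℝ a r : ℝ) = a 0 * r 0 + a 1 * r 1 + a 2 * r 2 := by
  simp only [PiLp.inner_apply, RCLike.inner_apply, starRingEnd_apply, star_trivial,
    Fin.sum_univ_three]
  ring

lemma coords_sq (a : E3) (h : ‖a‖ = 1) : (a 0) ^ 2 + (a 1) ^ 2 + (a 2) ^ 2 = 1 := by
  have h1 : (inner ℝ a a : ℝ) = 1 := by
    rw [real_inner_self_eq_norm_mul_norm, h]; ring
  rw [inner_coords] at h1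
  nlinarith [h1]

theorem part2 (α a0 b0 c0 : ℝ) (hα : α ∈ Set.Ioc 0 (Real.pi / 2)) (a b c : E3)
    (ha : ‖a‖ = 1) (hb : ‖b‖ = 1) (hc : ‖c‖ = 1)
    (hab : (inner ℝ a b : ℝ) = 0)
    (hac : (inner ℝ a c : ℝ) = 0)
    (hbc : (inner ℝ b c : ℝ) = Real.cos α)
    (ρ : Matrix (Fin 2) (Fin 2) ℂ) (hρ : IsDensityMatrix ρ) :
    variance (qObs a0 a) ρ + variance (qObs b0 b) ρ + variance (qObs c0 c) ρ
          ≥ 2 - Real.cos α := by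
  obtain ⟨hα0, hα2⟩ := hα
  set t := Real.cos α with htdef
  have ht0 : 0 ≤ t := Real.cos_nonneg_of_mem_Icc ⟨by linarith [Real.pi_pos], hα2⟩
  have ht1 : t < 1 := by
    have := Real.cos_lt_cos_of_nonneg_of_le_pi (le_refl 0)
      (by linarith [Real.pi_pos]) hα0
    rwa [Real.cos_zero] at this
  set R1 := ((pauli1 * ρ).trace).re with hR1
  set R2 := ((pauli2 * ρ).trace).re with hR2
  set R3 := ((pauli3 * ρ).trace).re with hR3
  set r : E3 := !₂[R1, R2, R3] with hrdef
  have hr0 : r 0 = R1 := rfl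
  have hr1 : r 1 = R2 := rfl
  have hr2 : r 2 = R3 := rfl
  have hrsq : ‖r‖ ^ 2 ≤ 1 := by
    rw [← real_inner_self_eq_norm_sq, inner_coords, hr0, hr1, hr2]
    have := bloch_sq_le_one ρ hρ
    nlinarith [this]
  have hkey := key_ineq t ht0 ht1 a b c r ha hb hc hab hac hbc hrsq
  rw [variance_qObs a0 a (coords_sq a ha) ρ hρ.2,
    variance_qObs b0 b (coords_sq b hb) ρ hρ.2,
    variance_qObs c0 c (coords_sq c hc) ρ hρ.2]
  rw [inner_coords a r, inner_coords b r, inner_coords c r, hr0, hr1, hr2] at hkey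
  linarith [hkey]

set_option maxHeartbeats 2000000 in
theorem part3 (α a0 b0 c0 : ℝ) (hα : α ∈ Set.Ioc 0 (Real.pi / 2)) (a b c : E3)
    (ha : ‖a‖ = 1) (hb : ‖b‖ = 1) (hc : ‖c‖ = 1)
    (hab : (inner ℝ a b : ℝ) = 0)
    (hac : (inner ℝ a c : ℝ) = 0)
    (hbc : (inner ℝ b c : ℝ) = Real.cos α) :
    (∃ ρ : Matrix (Fin 2) (Fin 2) ℂ, IsDensityMatrix ρ ∧
        variance (qObs a0 a) ρ + variance (qObs b0 b) ρ + variance (qObs c0 c) ρ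
          = 2 - Real.cos α) := by
  obtain ⟨hα0, hα2⟩ := hα
  set t := Real.cos α with htdef
  have ht0 : 0 ≤ t := Real.cos_nonneg_of_mem_Icc ⟨by linarith [Real.pi_pos], hα2⟩
  have h2t : 0 < 2 + 2 * t := by linarith
  set k : ℝ := (Real.sqrt (2 + 2 * t))⁻¹ with hkdef
  have hksq : k ^ 2 = (2 + 2 * t)⁻¹ := by
    rw [hkdef, ← one_div, div_pow, Real.sq_sqrt h2t.le, one_pow, one_div]
  set r : E3 := k • (b + c) with hrdef
  have hbb : (inner ℝ b b : ℝ) = 1 := by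
    rw [real_inner_self_eq_norm_mul_norm, hb]; ring
  have hcc : (inner ℝ c c : ℝ) = 1 := by
    rw [real_inner_self_eq_norm_mul_norm, hc]; ring
  have hcb : (inner ℝ c b : ℝ) = t := by rw [real_inner_comm]; exact hbc
  have har : (inner ℝ a r : ℝ) = 0 := by
    rw [hrdef, real_inner_smul_right, inner_add_right, hab, hac]; ring
  have hbr : (inner ℝ b r : ℝ) = k * (1 + t) := by
    rw [hrdef, real_inner_smul_right, inner_add_right, hbb, hbc]
  have hcr : (inner ℝ c r : ℝ) = k * (1 + t) := by
    rw [hrdef, real_inner_smul_right, inner_add_right, hcb, hcc]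
    ring
  have hrr : (inner ℝ r r : ℝ) = 1 := by
    rw [hrdef, real_inner_smul_right, real_inner_smul_left, inner_add_right, inner_add_left,
      inner_add_left, hbb, hcc, hbc, hcb]
    rw [show k * (k * (1 + t + (t + 1))) = k ^ 2 * (2 + 2 * t) by ring, hksq]
    field_simp
  set x : E3 := (1/2 : ℝ) • r with hxdef
  have hx0 : x 0 = r 0 / 2 := by
    rw [hxdef]; simp only [PiLp.smul_apply, smul_eq_mul]; ring
  have hx1 : x 1 = r 1 / 2 := by
    rw [hxdef]; simp only [PiLp.smul_apply, smul_eq_mul]; ring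
  have hx2 : x 2 = r 2 / 2 := by
    rw [hxdef]; simp only [PiLp.smul_apply, smul_eq_mul]; ring
  have hrsum : r 0 ^ 2 + r 1 ^ 2 + r 2 ^ 2 = 1 := by
    rw [inner_coords] at hrr
    nlinarith [hrr]
  have hxsum : x 0 ^ 2 + x 1 ^ 2 + x 2 ^ 2 = 1/4 := by
    rw [hx0, hx1, hx2]
    nlinarith [hrsum]
  set ρ : Matrix (Fin 2) (Fin 2) ℂ := qObs (1/2) x with hρdef
  have htr : ρ.trace = 1 := by
    rw [hρdef, trace_qObs]
    norm_num
  have hidem : ρ * ρ = ρ := by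
    rw [hρdef, qObs_sq, hxsum]
    norm_num
  have hherm : ρᴴ = ρ := qObs_herm _ _
  have hpsd : ρ.PosSemidef := by
    have : ρ = ρᴴ * ρ := by rw [hherm, hidem]
    rw [this]
    exact Matrix.posSemidef_conjTranspose_mul_self ρ
  refine ⟨ρ, ⟨hpsd, htr⟩, ?_⟩
  obtain ⟨hp1, hp2, hp3⟩ := pauli_traces (1/2) x
  have hRe1 : ((pauli1 * ρ).trace).re = r 0 := by
    rw [hρdef, hp1, hx0]
    have h : (2 * ((r 0 / 2 : ℝ) : ℂ)) = ((r 0 : ℝ) : ℂ) := by push_cast; ring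
    rw [h, Complex.ofReal_re]
  have hRe2 : ((pauli2 * ρ).trace).re = r 1 := by
    rw [hρdef, hp2, hx1]
    have h : (2 * ((r 1 / 2 : ℝ) : ℂ)) = ((r 1 : ℝ) : ℂ) := by push_cast; ring
    rw [h, Complex.ofReal_re]
  have hRe3 : ((pauli3 * ρ).trace).re = r 2 := by
    rw [hρdef, hp3, hx2]
    have h : (2 * ((r 2 / 2 : ℝ) : ℂ)) = ((r 2 : ℝ) : ℂ) := by push_cast; ring
    rw [h, Complex.ofReal_re]
  rw [variance_qObs a0 a (coords_sq a ha) ρ htr,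
    variance_qObs b0 b (coords_sq b hb) ρ htr,
    variance_qObs c0 c (coords_sq c hc) ρ htr, hRe1, hRe2, hRe3,
    ← inner_coords a r, ← inner_coords b r, ← inner_coords c r, har, hbr, hcr]
  have : (k * (1 + t)) ^ 2 = (1 + t) / 2 := by
    rw [mul_pow, hksq]
    field_simp
  rw [this]
  ring

end Aux

/-- unit Bloch vectors with a ⊥ b, a ⊥ c and angle α between b and c:
spectrum of the Gram matrix and the tight uncertainty bound 2 − cos α. -/
theorem three_observables_two_orthogonal
    (α a0 b0 c0 : ℝ) (hα : α ∈ Set.Ioc 0 (Real.pi / 2)) (a b c : E3)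
    (ha : ‖a‖ = 1) (hb : ‖b‖ = 1) (hc : ‖c‖ = 1)
    (hab : (inner ℝ a b : ℝ) = 0)
    (hac : (inner ℝ a c : ℝ) = 0)
    (hbc : (inner ℝ b c : ℝ) = Real.cos α) :
    (Finset.univ.val.map (gram_isHermitian ![a, b, c]).eigenvalues
        = ({1, 1 - Real.cos α, 1 + Real.cos α} : Multiset ℝ)) ∧
    (∀ ρ : Matrix (Fin 2) (Fin 2) ℂ, IsDensityMatrix ρ →
        variance (qObs a0 a) ρ + variance (qObs b0 b) ρ + variance (qObs c0 c) ρ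
          ≥ 2 - Real.cos α) ∧
    (∃ ρ : Matrix (Fin 2) (Fin 2) ℂ, IsDensityMatrix ρ ∧
        variance (qObs a0 a) ρ + variance (qObs b0 b) ρ + variance (qObs c0 c) ρ
          = 2 - Real.cos α) := by
  refine ⟨part1 α a b c ha hb hc hab hac hbc, fun ρ hρ => part2 α a0 b0 c0 hα a b c ha hb hc hab hac hbc ρ hρ, part3 α a0 b0 c0 hα a b c ha hb hc hab hac hbc⟩

end
end

section
/- Let n ≥ 3 and let A_k = a₀⁽ᵏ⁾·I + a_k·σ (k = 1,…,n) be qubit observables such that {a₁,a₂,a₃} is linearly independent in ℝ³. Then the infimum over all qubit density matrices ρ of Σ_{k=1}^{n} (Δ_ρA_k)² equals Tr(T_{a₁,…,a_n}) − λ_max(T_{a₁,…,a_n}), and this infimum is attained by some qubit density matrix. -/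
open Matrix MeasureTheory Filter Set
open scoped RealInnerProductSpace Kronecker ComplexOrder

noncomputable section

/-! ### Auxiliary lemmas -/

section Aux

lemma qObs_eq' (a0 : ℝ) (a : E3) : qObs a0 a =
    !![((a0 : ℂ) + a 2), ((a 0 : ℂ) - (a 1 : ℂ)*Complex.I);
       ((a 0 : ℂ) + (a 1 : ℂ)*Complex.I), ((a0 : ℂ) - a 2)] := by
  ext i j
  fin_cases i <;> fin_cases j <;>
    simp [qObs, pauli1, pauli2, pauli3, Matrix.one_apply] <;> ring

lemma variance_formula' (a0 : ℝ) (a : E3) (p q x y : ℝ) (hpq : p + q = 1) :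
    variance (qObs a0 a) !![(p : ℂ), (x : ℂ) + (y:ℂ)*Complex.I;
        (x : ℂ) - (y:ℂ)*Complex.I, (q : ℂ)]
      = (a 0 ^ 2 + a 1 ^ 2 + a 2 ^ 2)
        - (a 0 * (2*x) + a 1 * (-2*y) + a 2 * (p - q)) ^ 2 := by
  have hq : q = 1 - p := by linarith
  subst hq
  simp only [variance, mean, qObs_eq', Matrix.trace_fin_two, Matrix.mul_apply,
    Fin.sum_univ_two]
  simp
  ring

lemma dot_eq_sum_repr' {m : ℕ} {S : Matrix (Fin m) (Fin m) ℝ} (hS : S.IsHermitian)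
    (y z : EuclideanSpace ℝ (Fin m)) :
    (y : Fin m → ℝ) ⬝ᵥ (z : Fin m → ℝ)
      = ∑ i, hS.eigenvectorBasis.repr y i * hS.eigenvectorBasis.repr z i := by
  have h1 : (y : Fin m → ℝ) ⬝ᵥ (z : Fin m → ℝ) = ⟪y, z⟫ := by
    simp only [PiLp.inner_apply, RCLike.inner_apply, conj_trivial, dotProduct]
    exact Finset.sum_congr rfl fun _ _ => mul_comm _ _
  have h2 := hS.eigenvectorBasis.repr.inner_map_map y z
  rw [h1, ← h2]
  simp only [PiLp.inner_apply, RCLike.inner_apply, conj_trivial]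
  exact Finset.sum_congr rfl fun _ _ => mul_comm _ _

lemma realHerm_transpose {m : ℕ} {S : Matrix (Fin m) (Fin m) ℝ} (hS : S.IsHermitian) :
    Sᵀ = S := by
  have := hS; rwa [Matrix.IsHermitian, Matrix.conjTranspose_eq_transpose_of_trivial] at this

lemma repr_mulVec' {m : ℕ} {S : Matrix (Fin m) (Fin m) ℝ} (hS : S.IsHermitian)
    (x : EuclideanSpace ℝ (Fin m)) (i : Fin m) :
    hS.eigenvectorBasis.repr (WithLp.toLp 2 (S *ᵥ x)) i
      = hS.eigenvalues i * hS.eigenvectorBasis.repr x i := by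
  set v : Fin m → ℝ := WithLp.equiv 2 _ (hS.eigenvectorBasis i) with hv
  have heig : S *ᵥ v = hS.eigenvalues i • v := hS.mulVec_eigenvectorBasis i
  rw [OrthonormalBasis.repr_apply_apply, OrthonormalBasis.repr_apply_apply]
  simp only [PiLp.inner_apply, RCLike.inner_apply, conj_trivial]
  show (S *ᵥ x.ofLp) ⬝ᵥ v = hS.eigenvalues i * (x.ofLp ⬝ᵥ v)
  rw [dotProduct_comm (S *ᵥ x.ofLp), dotProduct_comm x.ofLp]
  rw [Matrix.dotProduct_mulVec, ← Matrix.mulVec_transpose, realHerm_transpose hS, heig,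
    smul_dotProduct]
  simp

/-- Rayleigh-type upper bound. -/
lemma rayleigh_upper {m : ℕ} {S : Matrix (Fin m) (Fin m) ℝ} (hS : S.IsHermitian)
    {lam : ℝ} (hlam : ∀ i, hS.eigenvalues i ≤ lam) (x : Fin m → ℝ) :
    x ⬝ᵥ (S *ᵥ x) ≤ lam * (x ⬝ᵥ x) := by
  have h1 := dot_eq_sum_repr' hS (WithLp.toLp 2 x) (WithLp.toLp 2 (S *ᵥ x))
  have h2 := dot_eq_sum_repr' hS (WithLp.toLp 2 x) (WithLp.toLp 2 x)
  rw [h1, h2, Finset.mul_sum]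
  refine Finset.sum_le_sum fun i _ => ?_
  rw [repr_mulVec' hS (WithLp.toLp 2 x) i]
  nlinarith [hlam i, sq_nonneg (hS.eigenvectorBasis.repr (WithLp.toLp 2 x) i)]

lemma dot_self_unit {m : ℕ} {S : Matrix (Fin m) (Fin m) ℝ} (hS : S.IsHermitian) (i : Fin m) :
    (WithLp.equiv 2 (Fin m → ℝ) (hS.eigenvectorBasis i)) ⬝ᵥ
      (WithLp.equiv 2 (Fin m → ℝ) (hS.eigenvectorBasis i)) = 1 := by
  have h := hS.eigenvectorBasis.orthonormal.1 i
  have h2 : ⟪hS.eigenvectorBasis i, hS.eigenvectorBasis i⟫ = (1 : ℝ) := by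
    rw [real_inner_self_eq_norm_sq, h]; norm_num
  rw [← h2]
  simp only [PiLp.inner_apply, RCLike.inner_apply, conj_trivial, dotProduct]
  rfl

lemma dot_mulVec_self {n m : ℕ} (B : Matrix (Fin n) (Fin m) ℝ) (r : Fin m → ℝ) :
    r ⬝ᵥ ((Bᵀ * B) *ᵥ r) = (B *ᵥ r) ⬝ᵥ (B *ᵥ r) := by
  rw [← Matrix.mulVec_mulVec, Matrix.dotProduct_mulVec, Matrix.vecMul_transpose]

/-- The key elementary inequality for positive semidefiniteness of the Bloch state. -/
lemma quad_nonneg (p q x y C D u1 u2 : ℝ) (hp : 0 ≤ p) (hq : 0 ≤ q) (hC : 0 ≤ C) (hD : 0 ≤ D)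
    (hxy : x^2 + y^2 ≤ p*q) (hu : u1^2 + u2^2 = C*D) :
    0 ≤ p*C + q*D + 2*(x*u1 + y*u2) := by
  have h1 : (x*u1+y*u2)^2 ≤ p*q*(C*D) := by
    nlinarith [sq_nonneg (x*u2 - y*u1), mul_nonneg hC hD]
  have h2 : 0 ≤ p*C + q*D := by
    have hh1 := mul_nonneg hp hC; have hh2 := mul_nonneg hq hD; linarith
  have h3 : (2*(x*u1+y*u2))^2 ≤ (p*C+q*D)^2 := by
    nlinarith [sq_nonneg (p*C - q*D)]
  nlinarith [sq_nonneg (p*C + q*D + 2*(x*u1+y*u2)), h2, h3]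

/-- The classical optimization problem. -/
lemma classical_opt {n : ℕ} (hn : 3 ≤ n) (a : Fin n → E3) (h0 : a ⟨0, Nat.lt_of_lt_of_le (by norm_num) hn⟩ ≠ 0) :
    IsGreatest {t : ℝ | ∃ r : Fin 3 → ℝ, r ⬝ᵥ r ≤ 1 ∧
      t = ∑ k, (a k 0 * r 0 + a k 1 * r 1 + a k 2 * r 2)^2} (lamMax a) := by
  haveI : Nonempty (Fin n) := ⟨⟨0, Nat.lt_of_lt_of_le (by norm_num) hn⟩⟩
  set B : Matrix (Fin n) (Fin 3) ℝ := Matrix.of (fun k l => a k l) with hB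
  have hBH : Bᴴ = Bᵀ := Matrix.conjTranspose_eq_transpose_of_trivial B
  have hgram : gram a = B * Bᵀ := by
    ext i j
    simp [_root_.gram, Matrix.mul_apply, PiLp.inner_apply, RCLike.inner_apply, conj_trivial, hB,
      mul_comm]
  have hG := gram_isHermitian a
  have hMpsd : (Bᵀ * B).PosSemidef := by
    have := Matrix.posSemidef_conjTranspose_mul_self B; rwa [hBH] at this
  have hMh := hMpsd.isHermitian
  have hub : ∀ i, hG.eigenvalues i ≤ lamMax a :=
    fun i => le_ciSup (Set.finite_range _).bddAbove i
  -- positivity of lamMax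
  have h00 : (0:ℝ) < gram a ⟨0, Nat.lt_of_lt_of_le (by norm_num) hn⟩ ⟨0, Nat.lt_of_lt_of_le (by norm_num) hn⟩ := by
    have h : gram a ⟨0, Nat.lt_of_lt_of_le (by norm_num) hn⟩ ⟨0, Nat.lt_of_lt_of_le (by norm_num) hn⟩ = ⟪a ⟨0, Nat.lt_of_lt_of_le (by norm_num) hn⟩, a ⟨0, Nat.lt_of_lt_of_le (by norm_num) hn⟩⟫ := rfl
    rw [h, real_inner_self_eq_norm_sq]
    exact pow_pos (norm_pos_iff.mpr h0) 2
  have hL0 : 0 < lamMax a := by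
    have hray := rayleigh_upper hG hub (Pi.single ⟨0, Nat.lt_of_lt_of_le (by norm_num) hn⟩ 1)
    rw [Matrix.mulVec_single, single_dotProduct, single_dotProduct] at hray
    simp only [Pi.single_eq_same, one_mul, mul_one, Pi.smul_apply, Matrix.col_apply,
      MulOpposite.op_one, one_smul] at hray
    linarith
  -- the quadratic form as a dot product
  have hQ : ∀ r : Fin 3 → ℝ, ∑ k, (a k 0 * r 0 + a k 1 * r 1 + a k 2 * r 2)^2
      = r ⬝ᵥ ((Bᵀ * B) *ᵥ r) := by
    intro r
    rw [dot_mulVec_self]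
    simp only [dotProduct, Matrix.mulVec, Fin.sum_univ_three]
    refine Finset.sum_congr rfl fun k _ => ?_
    simp only [hB, Matrix.of_apply, dotProduct, Fin.sum_univ_three]
    ring
  -- eigenvalues of M = BᵀB are bounded by lamMax
  have hMlam : ∀ i, hMh.eigenvalues i ≤ lamMax a := by
    intro i
    set μ := hMh.eigenvalues i with hμ
    have hμ0 : 0 ≤ μ := hMpsd.eigenvalues_nonneg i
    set v : Fin 3 → ℝ := WithLp.equiv 2 _ (hMh.eigenvectorBasis i) with hv
    have heig : (Bᵀ * B) *ᵥ v = μ • v := hMh.mulVec_eigenvectorBasis i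
    have hvv : v ⬝ᵥ v = 1 := dot_self_unit hMh i
    set w : Fin n → ℝ := B *ᵥ v with hw
    have hww : w ⬝ᵥ w = μ := by
      rw [hw, ← dot_mulVec_self, heig, dotProduct_smul, smul_eq_mul, hvv, mul_one]
    have hgw : gram a *ᵥ w = μ • w := by
      rw [hgram, hw]
      calc (B * Bᵀ) *ᵥ (B *ᵥ v) = B *ᵥ ((Bᵀ * B) *ᵥ v) := by
            rw [Matrix.mulVec_mulVec, Matrix.mulVec_mulVec, Matrix.mul_assoc]
        _ = μ • (B *ᵥ v) := by rw [heig, Matrix.mulVec_smul]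
    have hray := rayleigh_upper hG hub w
    rw [hgw, dotProduct_smul, smul_eq_mul, hww] at hray
    nlinarith [hray, hμ0, hL0]
  constructor
  · -- membership: attained by the top eigenvector of the Gram matrix
    obtain ⟨i0, hi0⟩ := exists_eq_ciSup_of_finite (f := hG.eigenvalues)
    have hi0' : hG.eigenvalues i0 = lamMax a := hi0
    set u : Fin n → ℝ := WithLp.equiv 2 _ (hG.eigenvectorBasis i0) with hu
    have hgu : gram a *ᵥ u = lamMax a • u := by
      rw [← hi0']; exact hG.mulVec_eigenvectorBasis i0
    have huu : u ⬝ᵥ u = 1 := dot_self_unit hG i0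
    set w : Fin 3 → ℝ := Bᵀ *ᵥ u with hw
    have hww : w ⬝ᵥ w = lamMax a := by
      rw [hw, ← dot_mulVec_self, Matrix.transpose_transpose, ← hgram, hgu,
        dotProduct_smul, smul_eq_mul, huu, mul_one]
    have hMw : (Bᵀ * B) *ᵥ w = lamMax a • w := by
      rw [hw]
      calc (Bᵀ * B) *ᵥ (Bᵀ *ᵥ u) = Bᵀ *ᵥ ((B * Bᵀ) *ᵥ u) := by
            rw [Matrix.mulVec_mulVec, Matrix.mulVec_mulVec, Matrix.mul_assoc]
        _ = lamMax a • (Bᵀ *ᵥ u) := by rw [← hgram, hgu, Matrix.mulVec_smul]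
    set c : ℝ := (Real.sqrt (lamMax a))⁻¹ with hc
    have hsq : Real.sqrt (lamMax a) ^ 2 = lamMax a := Real.sq_sqrt hL0.le
    have hs0 : Real.sqrt (lamMax a) ≠ 0 := by positivity
    refine ⟨c • w, ?_, ?_⟩
    · rw [smul_dotProduct, dotProduct_smul, hww, smul_eq_mul, smul_eq_mul, hc]
      rw [show (Real.sqrt (lamMax a))⁻¹ * ((Real.sqrt (lamMax a))⁻¹ * lamMax a)
        = lamMax a / (Real.sqrt (lamMax a))^2 by ring, hsq, div_self (ne_of_gt hL0)]
    · have hss : Real.sqrt (lamMax a) * Real.sqrt (lamMax a) = lamMax a :=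
        Real.mul_self_sqrt hL0.le
      rw [hQ, Matrix.mulVec_smul, hMw, smul_dotProduct, dotProduct_smul,
        dotProduct_smul, hww, smul_eq_mul, smul_eq_mul, smul_eq_mul, hc]
      rw [show (Real.sqrt (lamMax a))⁻¹ * ((Real.sqrt (lamMax a))⁻¹ * (lamMax a * lamMax a))
        = (lamMax a / (Real.sqrt (lamMax a) * Real.sqrt (lamMax a))) * lamMax a by ring,
        hss, div_self (ne_of_gt hL0), one_mul]
  · -- upper bound
    rintro t ⟨r, hr, rfl⟩
    rw [hQ r]
    calc r ⬝ᵥ ((Bᵀ * B) *ᵥ r) ≤ lamMax a * (r ⬝ᵥ r) := rayleigh_upper hMh hMlam r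
      _ ≤ lamMax a * 1 := by exact mul_le_mul_of_nonneg_left hr hL0.le
      _ = lamMax a := mul_one _

lemma gram_trace {n : ℕ} (a : Fin n → E3) :
    (gram a).trace = ∑ k, (a k 0^2 + a k 1^2 + a k 2^2) := by
  simp [Matrix.trace, Matrix.diag, _root_.gram, PiLp.inner_apply, RCLike.inner_apply, conj_trivial,
    Fin.sum_univ_three, sq]

lemma bloch_psd (p q x y : ℝ) (hp : 0 ≤ p) (hq : 0 ≤ q) (hxy : x^2+y^2 ≤ p*q) :
    (!![(p : ℂ), (x:ℂ)+(y:ℂ)*Complex.I;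
        (x:ℂ)-(y:ℂ)*Complex.I, (q:ℂ)]).PosSemidef := by
  rw [Matrix.posSemidef_iff_dotProduct_mulVec]
  constructor
  · ext i j
    fin_cases i <;> fin_cases j <;>
      simp [Matrix.conjTranspose_apply, Complex.ext_iff]
  · intro v
    rw [Complex.le_def]
    constructor
    · have hre : ((star v) ⬝ᵥ ((!![(p : ℂ), (x:ℂ)+(y:ℂ)*Complex.I;
          (x:ℂ)-(y:ℂ)*Complex.I, (q:ℂ)]) *ᵥ v)).re
          = p*((v 0).re^2+(v 0).im^2) + q*((v 1).re^2+(v 1).im^2)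
            + 2*(x*((v 0).re*(v 1).re+(v 0).im*(v 1).im)
                 + y*((v 0).im*(v 1).re - (v 0).re*(v 1).im)) := by
        simp [dotProduct, Matrix.mulVec, Fin.sum_univ_two, Complex.add_re, Complex.mul_re,
          Complex.mul_im]
        ring
      rw [hre]
      simp only [Complex.zero_re]
      exact quad_nonneg p q x y _ _ _ _ hp hq (by positivity) (by positivity) hxy (by ring)
    · simp [dotProduct, Matrix.mulVec, Fin.sum_univ_two, Complex.add_im, Complex.mul_re,
        Complex.mul_im]
      ring

end Aux

/-- the optimal state-independent lower bound for the sum of the variances of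
n ≥ 3 qubit observables whose first three Bloch vectors are linearly independent. -/
theorem sum_variances_n_observables_isLeast
    (n : ℕ) (hn : 3 ≤ n) (a0 : Fin n → ℝ) (a : Fin n → E3)
    (hli : LinearIndependent ℝ ![a ⟨0, by omega⟩, a ⟨1, by omega⟩, a ⟨2, by omega⟩]) :
    IsLeast {v : ℝ | ∃ ρ : Matrix (Fin 2) (Fin 2) ℂ, IsDensityMatrix ρ ∧
        v = ∑ k : Fin n, variance (qObs (a0 k) (a k)) ρ}
      ((gram a).trace - lamMax a) := by
  have h0 : a ⟨0, by omega⟩ ≠ 0 := by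
    have h := hli.ne_zero 0
    simpa using h
  have hopt := classical_opt hn a h0
  have htr : (gram a).trace = ∑ k, (a k 0^2 + a k 1^2 + a k 2^2) := gram_trace a
  constructor
  · -- the bound is attained
    obtain ⟨r, hr1, hrQ⟩ := hopt.1
    have hr3 : (r 0)^2 + (r 1)^2 + (r 2)^2 ≤ 1 := by
      have h : r ⬝ᵥ r = (r 0)^2+(r 1)^2+(r 2)^2 := by
        simp [dotProduct, Fin.sum_univ_three]; ring
      rw [h] at hr1; exact hr1
    set p : ℝ := (1 + r 2)/2 with hpdef
    set q : ℝ := (1 - r 2)/2 with hqdef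
    set x : ℝ := r 0/2 with hxdef
    set y : ℝ := -(r 1)/2 with hydef
    have hpq : p + q = 1 := by rw [hpdef, hqdef]; ring
    have hp0 : 0 ≤ p := by
      rw [hpdef]; nlinarith [sq_nonneg (r 0), sq_nonneg (r 1), sq_nonneg (1 + r 2)]
    have hq0 : 0 ≤ q := by
      rw [hqdef]; nlinarith [sq_nonneg (r 0), sq_nonneg (r 1), sq_nonneg (1 - r 2)]
    have hxy : x^2 + y^2 ≤ p*q := by
      rw [hxdef, hydef, hpdef, hqdef]; nlinarith [hr3]
    refine ⟨!![(p : ℂ), (x:ℂ)+(y:ℂ)*Complex.I; (x:ℂ)-(y:ℂ)*Complex.I, (q:ℂ)],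
      ⟨bloch_psd p q x y hp0 hq0 hxy, ?_⟩, ?_⟩
    · have hc : ((p:ℂ) + (q:ℂ)) = 1 := by exact_mod_cast hpq
      simpa [Matrix.trace_fin_two] using hc
    · rw [Finset.sum_congr rfl fun k _ => variance_formula' (a0 k) (a k) p q x y hpq]
      rw [Finset.sum_sub_distrib, ← htr]
      congr 1
      rw [hrQ]
      refine Finset.sum_congr rfl fun k _ => ?_
      rw [hpdef, hqdef, hxdef, hydef]; ring
  · -- it is a lower bound
    rintro v ⟨ρ, ⟨hpsd, htr1⟩, rfl⟩
    have hherm := hpsd.isHermitian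
    set p : ℝ := (ρ 0 0).re with hp
    set q : ℝ := (ρ 1 1).re with hq
    set x : ℝ := (ρ 0 1).re with hx
    set y : ℝ := (ρ 0 1).im with hy
    have h00 : ρ 0 0 = (p:ℂ) := by
      have h := congr_fun (congr_fun hherm 0) 0
      rw [Matrix.conjTranspose_apply] at h
      exact (Complex.conj_eq_iff_re.mp h).symm
    have h11 : ρ 1 1 = (q:ℂ) := by
      have h := congr_fun (congr_fun hherm 1) 1
      rw [Matrix.conjTranspose_apply] at h
      exact (Complex.conj_eq_iff_re.mp h).symm
    have h01 : ρ 0 1 = (x:ℂ) + (y:ℂ)*Complex.I := (Complex.re_add_im (ρ 0 1)).symm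
    have h10 : ρ 1 0 = (x:ℂ) - (y:ℂ)*Complex.I := by
      have h := congr_fun (congr_fun hherm 0) 1
      rw [Matrix.conjTranspose_apply] at h
      have h2 : ρ 1 0 = (starRingEnd ℂ) (ρ 0 1) := by
        rw [← h, Complex.star_def, Complex.conj_conj]
      rw [h2, h01]
      simp [Complex.ext_iff]
    have hρeq : ρ = !![(p:ℂ), (x:ℂ)+(y:ℂ)*Complex.I; (x:ℂ)-(y:ℂ)*Complex.I, (q:ℂ)] := by
      ext i j; fin_cases i <;> fin_cases j <;>
        simp only [Matrix.cons_val', Matrix.cons_val_zero, Matrix.cons_val_one,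
          Matrix.head_cons, Matrix.head_fin_const, Matrix.empty_val',
          Matrix.cons_val_fin_one] <;>
        first | exact h00 | exact h01 | exact h10 | exact h11
    have hpq : p + q = 1 := by
      have h := congrArg Complex.re htr1
      rw [Matrix.trace_fin_two, h00, h11] at h
      simpa using h
    have hdet : x^2 + y^2 ≤ p*q := by
      have hd := hherm.det_eq_prod_eigenvalues
      rw [Matrix.det_fin_two, h00, h01, h10, h11, Fin.prod_univ_two] at hd
      have hge : (0:ℝ) ≤ hherm.eigenvalues 0 * hherm.eigenvalues 1 :=
        mul_nonneg (hpsd.eigenvalues_nonneg 0) (hpsd.eigenvalues_nonneg 1)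
      have hre := congrArg Complex.re hd
      simp [Complex.mul_re, Complex.add_re, Complex.sub_re, Complex.mul_im] at hre
      nlinarith [hre, hge]
    rw [hρeq]
    rw [Finset.sum_congr rfl fun k _ => variance_formula' (a0 k) (a k) p q x y hpq]
    rw [Finset.sum_sub_distrib, ← htr]
    have hmem : (∑ k : Fin n, (a k 0 * (2*x) + a k 1 * (-2*y) + a k 2 * (p - q))^2)
        ∈ {t : ℝ | ∃ r : Fin 3 → ℝ, r ⬝ᵥ r ≤ 1 ∧
          t = ∑ k, (a k 0 * r 0 + a k 1 * r 1 + a k 2 * r 2)^2} := by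
      refine ⟨![2*x, -2*y, p - q], ?_, ?_⟩
      · simp only [dotProduct, Fin.sum_univ_three, Matrix.cons_val_zero, Matrix.cons_val_one,
          Matrix.head_cons, Matrix.cons_val_two, Matrix.tail_cons]
        nlinarith [hdet, hpq, sq_nonneg (p - q)]
      · refine Finset.sum_congr rfl fun k _ => ?_
        simp only [Matrix.cons_val_zero, Matrix.cons_val_one, Matrix.head_cons,
          Matrix.cons_val_two, Matrix.tail_cons]
    have hle := hopt.2 hmem
    linarith

end
end
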